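/- arXiv:0806.3449 — 6 statements merged into one kernel-verified Lean document; each statement's English description precedes it below -/
import Mathlib

section
/- Let X and M be real Banach spaces, U₀ ⊂ X a subset and O₀ ⊂ M an open subset. Let J : U₀ × O₀ → ℝ be continuous, with J(w,·) ∈ C¹(O₀) for each w ∈ U₀ and with partial Fréchet derivative ∂_M J continuous on U₀ × O₀ as a map into M'. Let u : O₀ → U₀ be continuous (into X) such that u(μ) is a global minimizer of J(·,μ) in U₀ for each μ ∈ O₀. Then the minimum-value function J_*(μ) := J(u(μ),μ) is continuously Fréchet differentiable on O₀, and J_*'(μ) = ∂_M J(u(μ),μ) for all μ ∈ O₀. -/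
open Set Filter Topology

/-- **Envelope theorem** (Theorem 2.1 of Kimura–Wakano).
`X` and `M` are real Banach spaces, `U₀ ⊆ X`, `O₀ ⊆ M` open.
`J : U₀ × O₀ → ℝ` is continuous, `J(w,·)` is differentiable on `O₀` with partial
Fréchet derivative `DMJ w μ ∈ M'`, and `∂_M J = DMJ` is continuous on `U₀ × O₀`.
`u : O₀ → U₀` is continuous and `u μ` is a global minimizer of `J(·,μ)` in `U₀`.
Then `J_*(μ) := J (u μ) μ` is continuously Fréchet differentiable on `O₀` with
`J_*'(μ) = ∂_M J (u μ) μ`. -/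
theorem envelope_theorem
    {X M : Type*} [NormedAddCommGroup X] [NormedSpace ℝ X] [CompleteSpace X]
    [NormedAddCommGroup M] [NormedSpace ℝ M] [CompleteSpace M]
    (U₀ : Set X) (O₀ : Set M) (hO₀ : IsOpen O₀)
    (J : X → M → ℝ) (DMJ : X → M → (M →L[ℝ] ℝ))
    (hJc : ContinuousOn (fun p : X × M => J p.1 p.2) (U₀ ×ˢ O₀))
    (hJd : ∀ w ∈ U₀, ∀ μ ∈ O₀, HasFDerivAt (fun ν => J w ν) (DMJ w μ) μ)
    (hDc : ContinuousOn (fun p : X × M => DMJ p.1 p.2) (U₀ ×ˢ O₀))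
    (u : M → X) (hu : ContinuousOn u O₀) (huU : MapsTo u O₀ U₀)
    (hmin : ∀ μ ∈ O₀, ∀ w ∈ U₀, J (u μ) μ ≤ J w μ) :
    (∀ μ ∈ O₀, HasFDerivAt (fun ν => J (u ν) ν) (DMJ (u μ) μ) μ) ∧
      ContinuousOn (fun μ => DMJ (u μ) μ) O₀ := by
  constructor
  · intro μ₀ hμ₀
    have huμ₀ : u μ₀ ∈ U₀ := huU hμ₀
    set L := DMJ (u μ₀) μ₀ with hLdef
    rw [hasFDerivAt_iff_isLittleO, Asymptotics.isLittleO_iff]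
    intro c hc
    have hA : HasFDerivAt (fun ν => J (u μ₀) ν) L μ₀ := hJd _ huμ₀ _ hμ₀
    have hA' := (hasFDerivAt_iff_isLittleO.mp hA).def (half_pos hc)
    obtain ⟨r, hr, hrsub⟩ := Metric.isOpen_iff.mp hO₀ μ₀ hμ₀
    have hcont := hDc (u μ₀, μ₀) (mk_mem_prod huμ₀ hμ₀)
    rw [Metric.continuousWithinAt_iff] at hcont
    obtain ⟨r₁, hr₁, hball⟩ := hcont (c / 2) (half_pos hc)
    have hucont := hu μ₀ hμ₀
    rw [Metric.continuousWithinAt_iff] at hucont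
    obtain ⟨r₂, hr₂, hu2⟩ := hucont r₁ hr₁
    set δ := min r (min r₁ r₂) with hδdef
    have hδ : 0 < δ := lt_min hr (lt_min hr₁ hr₂)
    have hballO : Metric.ball μ₀ δ ⊆ O₀ :=
      (Metric.ball_subset_ball (min_le_left _ _)).trans hrsub
    have key : ∀ ν ∈ Metric.ball μ₀ δ, ∀ ξ ∈ Metric.ball μ₀ δ,
        ‖DMJ (u ν) ξ - L‖ ≤ c / 2 := by
      intro ν hν ξ hξ
      have hνO : ν ∈ O₀ := hballO hν
      have hξO : ξ ∈ O₀ := hballO hξ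
      have hduν : dist (u ν) (u μ₀) < r₁ :=
        hu2 hνO (lt_of_lt_of_le hν ((min_le_right _ _).trans (min_le_right _ _)))
      have hd : dist ((u ν, ξ) : X × M) (u μ₀, μ₀) < r₁ := by
        rw [Prod.dist_eq]
        exact max_lt hduν (lt_of_lt_of_le hξ ((min_le_right _ _).trans (min_le_left _ _)))
      have := hball (mk_mem_prod (huU hνO) hξO) hd
      rw [dist_eq_norm] at this
      exact this.le
    filter_upwards [Metric.ball_mem_nhds μ₀ hδ, hA'] with ν hν hAν
    have hνO := hballO hν
    have hμ₀b : μ₀ ∈ Metric.ball μ₀ δ := Metric.mem_ball_self hδ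
    have hB : ‖J (u ν) ν - J (u ν) μ₀ - L (ν - μ₀)‖ ≤ c / 2 * ‖ν - μ₀‖ := by
      refine (convex_ball μ₀ δ).norm_image_sub_le_of_norm_hasFDerivWithin_le'
        (f' := fun ξ => DMJ (u ν) ξ) (fun x hx =>
          (hJd _ (huU hνO) _ (hballO hx)).hasFDerivWithinAt)
        (fun x hx => key ν hν x hx) hμ₀b hν
    have h1 : J (u ν) ν ≤ J (u μ₀) ν := hmin ν hνO _ huμ₀
    have h2 : J (u μ₀) μ₀ ≤ J (u ν) μ₀ := hmin μ₀ hμ₀ _ (huU hνO)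
    have hAν' : |J (u μ₀) ν - J (u μ₀) μ₀ - L (ν - μ₀)| ≤ c / 2 * ‖ν - μ₀‖ := by
      simpa [Real.norm_eq_abs] using hAν
    have hB' : |J (u ν) ν - J (u ν) μ₀ - L (ν - μ₀)| ≤ c / 2 * ‖ν - μ₀‖ := by
      simpa [Real.norm_eq_abs] using hB
    rw [Real.norm_eq_abs, abs_le]
    have hn : (0:ℝ) ≤ ‖ν - μ₀‖ := norm_nonneg _
    rcases abs_le.mp hAν' with ⟨_, hA2⟩
    rcases abs_le.mp hB' with ⟨hB1, _⟩
    constructor <;> nlinarith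
  · exact hDc.comp ((hu.prodMk continuousOn_id)) fun μ hμ => mk_mem_prod (huU hμ) hμ
end

section
/- Under the hypotheses of the envelope theorem (J continuous, J(w,·) ∈ C¹, ∂_M J continuous, u(μ) a global minimizer depending continuously on μ), if moreover U₀ is open, ∂_M J ∈ C^k(U₀ × O₀, M') and u ∈ C^k(O₀, X), then J_* ∈ C^{k+1}(O₀). -/
open Set Filter Topology
set_option maxHeartbeats 1000000 in

theorem envelope_hasFDerivAt
    {X M : Type*} [NormedAddCommGroup X] [NormedSpace ℝ X]
    [NormedAddCommGroup M] [NormedSpace ℝ M]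
    (U₀ : Set X) (O₀ : Set M) (hU₀ : IsOpen U₀) (hO₀ : IsOpen O₀)
    (J : X → M → ℝ) (DMJ : X → M → (M →L[ℝ] ℝ))
    (hJd : ∀ w ∈ U₀, ∀ μ ∈ O₀, HasFDerivAt (fun ν => J w ν) (DMJ w μ) μ)
    (hDc : ContinuousOn (fun p : X × M => DMJ p.1 p.2) (U₀ ×ˢ O₀))
    (u : M → X) (hu : ContinuousOn u O₀) (huU : MapsTo u O₀ U₀)
    (hmin : ∀ μ ∈ O₀, ∀ w ∈ U₀, J (u μ) μ ≤ J w μ)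
    {μ₀ : M} (hμ₀ : μ₀ ∈ O₀) :
    HasFDerivAt (fun μ => J (u μ) μ) (DMJ (u μ₀) μ₀) μ₀ := by
  have hw₀U : u μ₀ ∈ U₀ := huU hμ₀
  rw [hasFDerivAt_iff_isLittleO, Asymptotics.isLittleO_iff]
  intro ε hε
  have hDca : ContinuousAt (fun p : X × M => DMJ p.1 p.2) (u μ₀, μ₀) :=
    hDc.continuousAt ((hU₀.prod hO₀).mem_nhds ⟨hw₀U, hμ₀⟩)
  have htend : ∀ᶠ p : X × M in 𝓝 (u μ₀, μ₀), dist (DMJ p.1 p.2) (DMJ (u μ₀) μ₀) ≤ ε := by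
    have h2 : ∀ᶠ q : (M →L[ℝ] ℝ) in 𝓝 (DMJ (u μ₀) μ₀), dist q (DMJ (u μ₀) μ₀) ≤ ε := by
      filter_upwards [Metric.ball_mem_nhds _ hε] with q hq
      exact (Metric.mem_ball.mp hq).le
    exact hDca.tendsto h2
  obtain ⟨s, hs, t, ht, hst⟩ := mem_nhds_prod_iff.mp htend
  obtain ⟨rs, hrs, hrsub⟩ := Metric.mem_nhds_iff.mp hs
  obtain ⟨rt, hrt, hrtub⟩ := Metric.mem_nhds_iff.mp ht
  set r := min rs rt with hrdef
  have hr : 0 < r := lt_min hrs hrt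
  have hball : ∀ (w' : X) (σ' : M), dist w' (u μ₀) < r → dist σ' μ₀ < r →
      dist (DMJ w' σ') (DMJ (u μ₀) μ₀) ≤ ε := by
    intro w' σ' h1 h2
    have hmem : (w', σ') ∈ s ×ˢ t :=
      Set.mk_mem_prod (hrsub (lt_of_lt_of_le h1 (min_le_left _ _)))
        (hrtub (lt_of_lt_of_le h2 (min_le_right _ _)))
    have h3 := hst hmem
    simp only [Set.mem_setOf_eq] at h3
    exact h3
  -- the good neighborhood of μ₀
  have hS : (O₀ ∩ Metric.ball μ₀ r ∩ u ⁻¹' Metric.ball (u μ₀) r) ∈ 𝓝 μ₀ := by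
    refine Filter.inter_mem (Filter.inter_mem (hO₀.mem_nhds hμ₀)
      (Metric.ball_mem_nhds _ hr)) ?_
    exact (hu.continuousAt (hO₀.mem_nhds hμ₀)) (Metric.ball_mem_nhds _ hr)
  obtain ⟨δ, hδ, hδsub⟩ := Metric.mem_nhds_iff.mp hS
  have hBO : Metric.ball μ₀ δ ⊆ O₀ := fun σ hσ => (hδsub hσ).1.1
  have hBr : Metric.ball μ₀ δ ⊆ Metric.ball μ₀ r := fun σ hσ => (hδsub hσ).1.2
  have hμ₀B : μ₀ ∈ Metric.ball μ₀ δ := Metric.mem_ball_self hδ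
  -- key mean value estimate
  have key : ∀ w ∈ U₀, dist w (u μ₀) < r → ∀ ν ∈ Metric.ball μ₀ δ,
      ‖J w ν - J w μ₀ - (DMJ (u μ₀) μ₀) (ν - μ₀)‖ ≤ ε * ‖ν - μ₀‖ := by
    intro w hw hwr ν hν
    have hder : ∀ σ ∈ Metric.ball μ₀ δ,
        HasFDerivWithinAt (fun ν => J w ν) (DMJ w σ) (Metric.ball μ₀ δ) σ :=
      fun σ hσ => (hJd w hw σ (hBO hσ)).hasFDerivWithinAt
    have hbd : ∀ σ ∈ Metric.ball μ₀ δ, ‖DMJ w σ - DMJ (u μ₀) μ₀‖ ≤ ε := by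
      intro σ hσ
      rw [← dist_eq_norm]
      exact hball w σ hwr (hBr hσ)
    exact Convex.norm_image_sub_le_of_norm_hasFDerivWithin_le' hder hbd
      (convex_ball μ₀ δ) hμ₀B hν
  have hBn : Metric.ball μ₀ δ ∈ 𝓝 μ₀ := Metric.ball_mem_nhds μ₀ hδ
  filter_upwards [hBn] with ν hν
  have hνO : ν ∈ O₀ := hBO hν
  have huνU : u ν ∈ U₀ := huU hνO
  have huνr : dist (u ν) (u μ₀) < r := (hδsub hν).2
  have hupper : J (u ν) ν - J (u μ₀) μ₀ - (DMJ (u μ₀) μ₀) (ν - μ₀) ≤ ε * ‖ν - μ₀‖ := by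
    have h1 : J (u ν) ν ≤ J (u μ₀) ν := hmin ν hνO (u μ₀) hw₀U
    have h2 := key (u μ₀) hw₀U (by simpa using hr) ν hν
    rw [Real.norm_eq_abs] at h2
    linarith [abs_le.mp h2]
  have hlower : -(ε * ‖ν - μ₀‖) ≤ J (u ν) ν - J (u μ₀) μ₀ - (DMJ (u μ₀) μ₀) (ν - μ₀) := by
    have h1 : J (u μ₀) μ₀ ≤ J (u ν) μ₀ := hmin μ₀ hμ₀ (u ν) huνU
    have h2 := key (u ν) huνU huνr ν hν
    rw [Real.norm_eq_abs] at h2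
    linarith [abs_le.mp h2]
  rw [Real.norm_eq_abs, abs_le]
  exact ⟨hlower, hupper⟩

/-- **Corollary to the envelope theorem** (Corollary 2.2 of Kimura–Wakano).
Under the hypotheses of the envelope theorem (`J` continuous, `J(w,·) ∈ C¹`,
`∂_M J` continuous, `u μ` a global minimizer depending continuously on `μ`),
if moreover `U₀` is open, `∂_M J ∈ C^k(U₀ × O₀, M')` and `u ∈ C^k(O₀, X)`,
then `J_* ∈ C^{k+1}(O₀)`. -/
theorem envelope_ck_corollary
    {X M : Type*} [NormedAddCommGroup X] [NormedSpace ℝ X] [CompleteSpace X]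
    [NormedAddCommGroup M] [NormedSpace ℝ M] [CompleteSpace M]
    (U₀ : Set X) (O₀ : Set M) (hU₀ : IsOpen U₀) (hO₀ : IsOpen O₀)
    (J : X → M → ℝ) (DMJ : X → M → (M →L[ℝ] ℝ))
    (hJc : ContinuousOn (fun p : X × M => J p.1 p.2) (U₀ ×ˢ O₀))
    (hJd : ∀ w ∈ U₀, ∀ μ ∈ O₀, HasFDerivAt (fun ν => J w ν) (DMJ w μ) μ)
    (hDc : ContinuousOn (fun p : X × M => DMJ p.1 p.2) (U₀ ×ˢ O₀))
    (u : M → X) (hu : ContinuousOn u O₀) (huU : MapsTo u O₀ U₀)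
    (hmin : ∀ μ ∈ O₀, ∀ w ∈ U₀, J (u μ) μ ≤ J w μ)
    (k : ℕ)
    (hDk : ContDiffOn ℝ k (fun p : X × M => DMJ p.1 p.2) (U₀ ×ˢ O₀))
    (huk : ContDiffOn ℝ k u O₀) :
    ContDiffOn ℝ (k + 1) (fun μ => J (u μ) μ) O₀ := by
  have hderiv : ∀ μ ∈ O₀, HasFDerivAt (fun μ => J (u μ) μ) (DMJ (u μ) μ) μ :=
    fun μ hμ => envelope_hasFDerivAt U₀ O₀ hU₀ hO₀ J DMJ hJd hDc u hu huU hmin hμ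
  have hcomp : ContDiffOn ℝ k (fun μ => DMJ (u μ) μ) O₀ := by
    have : ContDiffOn ℝ k (fun μ : M => (u μ, μ)) O₀ :=
      huk.prodMk contDiffOn_id
    exact hDk.comp this (fun μ hμ => ⟨huU hμ, hμ⟩)
  rw [contDiffOn_succ_iff_fderiv_of_isOpen hO₀]
  refine ⟨fun μ hμ => ((hderiv μ hμ).differentiableAt).differentiableWithinAt,
    by simp, ?_⟩
  exact hcomp.congr fun μ hμ => (hderiv μ hμ).fderiv
end

section
/- Under the hypotheses of the local-minimizer existence theorem, if additionally J ∈ C¹(U × O), then the minimizer map u satisfies ‖u(μ) − u₀‖_X = o(‖μ − μ₀‖_M^{1/2}) as μ → μ₀. -/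
open Set Filter Topology Asymptotics

set_option maxHeartbeats 2000000

/-- **Hölder-type estimate for the minimizer map** (Proposition 2.7 of
Kimura–Wakano).  Under the hypotheses of the local-minimizer existence theorem
(`J(·,μ) ∈ C²(U)`, `∂_X J` continuous, `∂_X² J` continuous at `(u₀,μ₀)`,
coercivity `∂_X² J(u₀,μ₀)[w,w] ≥ α‖w‖²`, `∂_X J(u₀,μ₀) = 0`), if additionally
`J ∈ C¹(U × O)`, then the continuous minimizer map `u : O₀ → U₀` (with
`∂_X J(u μ, μ) = 0`, `u μ₀ = u₀`, `u μ` the global minimizer of `J(·,μ)` in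
`U₀`) satisfies `‖u μ − u₀‖_X = o(‖μ − μ₀‖_M^{1/2})` as `μ → μ₀`. -/
theorem minimizer_holder_estimate
    {X M : Type*} [NormedAddCommGroup X] [NormedSpace ℝ X] [CompleteSpace X]
    [NormedAddCommGroup M] [NormedSpace ℝ M] [CompleteSpace M]
    (U : Set X) (O : Set M) (hU : IsOpen U) (hO : IsOpen O)
    (J : X → M → ℝ) (DXJ : X → M → (X →L[ℝ] ℝ))
    (DXXJ : X → M → (X →L[ℝ] X →L[ℝ] ℝ))
    (u₀ : X) (μ₀ : M) (hu₀U : u₀ ∈ U) (hμ₀O : μ₀ ∈ O)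
    (hJd1 : ∀ μ ∈ O, ∀ w ∈ U, HasFDerivAt (fun v => J v μ) (DXJ w μ) w)
    (hJd2 : ∀ μ ∈ O, ∀ w ∈ U, HasFDerivAt (fun v => DXJ v μ) (DXXJ w μ) w)
    (hJ2c : ∀ μ ∈ O, ContinuousOn (fun v => DXXJ v μ) U)
    (hDXc : ContinuousOn (fun p : X × M => DXJ p.1 p.2) (U ×ˢ O))
    (hcrit : DXJ u₀ μ₀ = 0)
    (hDXXc : ContinuousAt (fun p : X × M => DXXJ p.1 p.2) (u₀, μ₀))
    (α : ℝ) (hα : 0 < α)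
    (hcoer : ∀ w : X, α * ‖w‖ ^ 2 ≤ DXXJ u₀ μ₀ w w)
    -- additional hypothesis: `J ∈ C¹(U × O)`
    (hJC1 : ContDiffOn ℝ 1 (fun p : X × M => J p.1 p.2) (U ×ˢ O))
    -- the minimizer map provided by the local-minimizer existence theorem
    (U₀ : Set X) (O₀ : Set M) (u : M → X)
    (hU₀ : IsOpen U₀) (hO₀ : IsOpen O₀) (hu₀U₀ : u₀ ∈ U₀) (hμ₀O₀ : μ₀ ∈ O₀)
    (hU₀U : U₀ ⊆ U) (hO₀O : O₀ ⊆ O)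
    (hu : ContinuousOn u O₀) (huU₀ : MapsTo u O₀ U₀)
    (hu₀ : u μ₀ = u₀)
    (hucrit : ∀ μ ∈ O₀, DXJ (u μ) μ = 0)
    (humin : ∀ μ ∈ O₀, ∀ w ∈ U₀, J (u μ) μ ≤ J w μ) :
    (fun μ => u μ - u₀) =o[𝓝 μ₀] fun μ => Real.sqrt ‖μ - μ₀‖ := by
  rw [isLittleO_iff]
  intro c hc
  set ε : ℝ := α * c ^ 2 / 4 with hεdef
  have hε : 0 < ε := by positivity
  set Jp : X × M → ℝ := fun p => J p.1 p.2 with hJp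
  set DJ : X × M → (X × M →L[ℝ] ℝ) := fun p => fderiv ℝ Jp p with hDJ
  have hUO : IsOpen (U ×ˢ O) := hU.prod hO
  have hp₀ : (u₀, μ₀) ∈ U ×ˢ O := ⟨hu₀U, hμ₀O⟩
  -- continuity of the full derivative
  have hDJc : ContinuousOn DJ (U ×ˢ O) :=
    hJC1.continuousOn_fderiv_of_isOpen hUO le_rfl
  have hDJat : ContinuousAt DJ (u₀, μ₀) :=
    hDJc.continuousAt (hUO.mem_nhds hp₀)
  obtain ⟨δ₂, hδ₂, hDJball⟩ :
      ∃ δ₂ > 0, ∀ p : X × M, dist p (u₀, μ₀) < δ₂ →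
        ‖DJ p - DJ (u₀, μ₀)‖ < ε / 2 := by
    have hmem : (fun p : X × M => DJ p) ⁻¹' (Metric.ball (DJ (u₀, μ₀)) (ε / 2)) ∈
        𝓝 (u₀, μ₀) := hDJat (Metric.ball_mem_nhds (DJ (u₀, μ₀)) (by positivity : (0:ℝ) < ε / 2))
    rcases Metric.mem_nhds_iff.mp hmem with ⟨δ, hδ, hsub⟩
    refine ⟨δ, hδ, fun p hp => ?_⟩
    have := hsub (Metric.mem_ball.mpr hp)
    rwa [Set.mem_preimage, Metric.mem_ball, dist_eq_norm] at this
  obtain ⟨δ₁, hδ₁, hDXXball⟩ :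
      ∃ δ₁ > 0, ∀ p : X × M, dist p (u₀, μ₀) < δ₁ →
        ‖DXXJ p.1 p.2 - DXXJ u₀ μ₀‖ < α / 2 := by
    have hmem : (fun p : X × M => DXXJ p.1 p.2) ⁻¹' (Metric.ball (DXXJ u₀ μ₀) (α / 2)) ∈
        𝓝 (u₀, μ₀) := hDXXc (Metric.ball_mem_nhds (DXXJ u₀ μ₀) (by positivity : (0:ℝ) < α / 2))
    rcases Metric.mem_nhds_iff.mp hmem with ⟨δ, hδ, hsub⟩
    refine ⟨δ, hδ, fun p hp => ?_⟩
    have := hsub (Metric.mem_ball.mpr hp)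
    rw [Set.mem_preimage, Metric.mem_ball] at this
    exact lt_of_eq_of_lt (dist_eq_norm (DXXJ p.1 p.2) (DXXJ u₀ μ₀)).symm this
  obtain ⟨r₀, hr₀, hballU₀⟩ : ∃ r₀ > 0, Metric.ball u₀ r₀ ⊆ U₀ :=
    Metric.isOpen_iff.mp hU₀ u₀ hu₀U₀
  obtain ⟨δO, hδO, hballO⟩ : ∃ δO > 0, Metric.ball μ₀ δO ⊆ O :=
    Metric.isOpen_iff.mp hO μ₀ hμ₀O
  set ρ : ℝ := min r₀ (min δ₁ δ₂) with hρdef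
  have hρ : 0 < ρ := lt_min hr₀ (lt_min hδ₁ hδ₂)
  set δ : ℝ := min δO (min δ₁ δ₂) with hδdef
  have hδ : 0 < δ := lt_min hδO (lt_min hδ₁ hδ₂)
  have hρr₀ : ρ ≤ r₀ := min_le_left _ _
  have hρδ₁ : ρ ≤ δ₁ := le_trans (min_le_right _ _) (min_le_left _ _)
  have hρδ₂ : ρ ≤ δ₂ := le_trans (min_le_right _ _) (min_le_right _ _)
  have hδδO : δ ≤ δO := min_le_left _ _
  have hδδ₁ : δ ≤ δ₁ := le_trans (min_le_right _ _) (min_le_left _ _)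
  have hδδ₂ : δ ≤ δ₂ := le_trans (min_le_right _ _) (min_le_right _ _)
  -- eventual facts
  have Ev1 : ∀ᶠ μ in 𝓝 μ₀, μ ∈ O₀ := hO₀.mem_nhds hμ₀O₀
  have hucont : Filter.Tendsto u (𝓝 μ₀) (𝓝 u₀) := by
    have := hu.continuousAt (hO₀.mem_nhds hμ₀O₀)
    rwa [ContinuousAt, hu₀] at this
  have Ev2 : ∀ᶠ μ in 𝓝 μ₀, dist (u μ) u₀ < ρ :=
    hucont (Metric.ball_mem_nhds u₀ hρ)
  have Ev3 : ∀ᶠ μ in 𝓝 μ₀, μ ∈ Metric.ball μ₀ δ := Metric.ball_mem_nhds μ₀ hδ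
  filter_upwards [Ev1, Ev2, Ev3] with μ hμO₀ hμu hμball
  have hμO : μ ∈ O := hO₀O hμO₀
  set w : X := u μ with hw
  set h : X := u₀ - w with hh
  have hwu₀ : ‖w - u₀‖ < ρ := by rwa [← dist_eq_norm]
  have hwU₀ : w ∈ U₀ := huU₀ hμO₀
  have hwU : w ∈ U := hU₀U hwU₀
  have hμd : ‖μ - μ₀‖ < δ := by rw [← dist_eq_norm]; exact hμball
  -- the segment from w to u₀
  set L : ℝ → X := fun t => w + t • h with hL
  have hLd : ∀ t : ℝ, ‖L t - u₀‖ = ‖(1 - t) • (w - u₀)‖ := by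
    intro t
    congr 1
    simp only [hL, hh]
    module
  have hLmem : ∀ t ∈ Icc (0 : ℝ) 1, ‖L t - u₀‖ < ρ := by
    intro t ht
    rw [hLd t, norm_smul]
    calc ‖(1 : ℝ) - t‖ * ‖w - u₀‖ ≤ 1 * ‖w - u₀‖ := by
          apply mul_le_mul_of_nonneg_right _ (norm_nonneg _)
          rw [Real.norm_eq_abs, abs_le]
          constructor <;> nlinarith [ht.1, ht.2]
      _ = ‖w - u₀‖ := one_mul _
      _ < ρ := hwu₀
  have hLU : ∀ t ∈ Icc (0 : ℝ) 1, L t ∈ U := by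
    intro t ht
    apply hU₀U
    apply hballU₀
    rw [Metric.mem_ball, dist_eq_norm]
    exact lt_of_lt_of_le (hLmem t ht) hρr₀
  have hlineD : ∀ t : ℝ, HasDerivAt L h t := by
    intro t
    have : HasDerivAt (fun s : ℝ => s • h) ((1 : ℝ) • h) t :=
      (hasDerivAt_id t).smul_const h
    exact (by simpa using this : HasDerivAt (fun s : ℝ => s • h) h t).const_add w
  -- derivative of g
  have hg : ∀ t ∈ Icc (0 : ℝ) 1,
      HasDerivAt (fun s => J (L s) μ) (DXJ (L t) μ h) t := by
    intro t ht
    exact (hJd1 μ hμO (L t) (hLU t ht)).comp_hasDerivAt t (hlineD t)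
  -- derivative of φ
  have hφ : ∀ t ∈ Icc (0 : ℝ) 1,
      HasDerivAt (fun s => DXJ (L s) μ h) (DXXJ (L t) μ h h) t := by
    intro t ht
    have hc1 : HasDerivAt (fun s => DXJ (L s) μ) (DXXJ (L t) μ h) t :=
      (hJd2 μ hμO (L t) (hLU t ht)).comp_hasDerivAt t (hlineD t)
    have := hc1.clm_apply (hasDerivAt_const t h)
    simpa using this
  -- coercivity along the segment
  have hco : ∀ t ∈ Icc (0 : ℝ) 1, α / 2 * ‖h‖ ^ 2 ≤ DXXJ (L t) μ h h := by
    intro t ht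
    have hdist : dist ((L t, μ) : X × M) (u₀, μ₀) < δ₁ := by
      rw [Prod.dist_eq]
      apply max_lt
      · rw [dist_eq_norm]; exact lt_of_lt_of_le (hLmem t ht) hρδ₁
      · rw [dist_eq_norm]; exact lt_of_lt_of_le hμd hδδ₁
    have hB := hDXXball (L t, μ) hdist
    have key : |(DXXJ (L t) μ - DXXJ u₀ μ₀) h h| ≤ α / 2 * (‖h‖ * ‖h‖) := by
      calc |(DXXJ (L t) μ - DXXJ u₀ μ₀) h h|
          ≤ ‖(DXXJ (L t) μ - DXXJ u₀ μ₀) h‖ * ‖h‖ :=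
            ((DXXJ (L t) μ - DXXJ u₀ μ₀) h).le_opNorm h
        _ ≤ ‖DXXJ (L t) μ - DXXJ u₀ μ₀‖ * ‖h‖ * ‖h‖ :=
            mul_le_mul_of_nonneg_right
              ((DXXJ (L t) μ - DXXJ u₀ μ₀).le_opNorm h) (norm_nonneg _)
        _ ≤ α / 2 * ‖h‖ * ‖h‖ := by
            apply mul_le_mul_of_nonneg_right _ (norm_nonneg _)
            exact mul_le_mul_of_nonneg_right hB.le (norm_nonneg _)
        _ = α / 2 * (‖h‖ * ‖h‖) := by ring
    have hsub : (DXXJ (L t) μ - DXXJ u₀ μ₀) h h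
        = DXXJ (L t) μ h h - DXXJ u₀ μ₀ h h := by
      simp [ContinuousLinearMap.sub_apply]
    have hc0 := hcoer h
    rw [hsub] at key
    have := abs_le.mp key
    nlinarith [this.1, this.2, sq_nonneg ‖h‖, norm_nonneg h]
  have hφ0 : DXJ (L 0) μ h = 0 := by
    have : L 0 = w := by simp [hL]
    rw [this, hucrit μ hμO₀]
    rfl
  -- step A1 : φ t ≥ α/2 * t * ‖h‖²
  have stepA1 : ∀ t ∈ Icc (0 : ℝ) 1,
      α / 2 * ‖h‖ ^ 2 * t ≤ DXJ (L t) μ h := by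
    intro t ht
    set C : ℝ := α / 2 * ‖h‖ ^ 2 with hC
    have hmono : MonotoneOn (fun s => DXJ (L s) μ h - C * s) (Icc (0 : ℝ) 1) := by
      apply monotoneOn_of_hasDerivWithinAt_nonneg (convex_Icc 0 1)
        (f' := fun s => DXXJ (L s) μ h h - C)
      · intro s hs
        exact ((hφ s hs).sub (by simpa using (hasDerivAt_id s).const_mul C)).continuousAt.continuousWithinAt
      · intro s hs
        rw [interior_Icc] at hs
        exact (((hφ s (Ioo_subset_Icc_self hs)).sub
          (by simpa using (hasDerivAt_id s).const_mul C)).hasDerivWithinAt)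
      · intro s hs
        rw [interior_Icc] at hs
        have := hco s (Ioo_subset_Icc_self hs)
        linarith
    have := hmono (left_mem_Icc.mpr zero_le_one) ht ht.1
    simp only [hφ0, mul_zero, sub_zero, zero_sub] at this
    linarith
  -- step A2 : J u₀ μ − J w μ ≥ α/4 ‖h‖²
  have stepA2 : J w μ + α / 4 * ‖h‖ ^ 2 ≤ J u₀ μ := by
    set C : ℝ := α / 2 * ‖h‖ ^ 2 with hC
    have hmono : MonotoneOn (fun s => J (L s) μ - C / 2 * s ^ 2) (Icc (0 : ℝ) 1) := by
      apply monotoneOn_of_hasDerivWithinAt_nonneg (convex_Icc 0 1)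
        (f' := fun s => DXJ (L s) μ h - C * s)
      · intro s hs
        have hq : HasDerivAt (fun s : ℝ => C / 2 * s ^ 2) (C * s) s := by
          have h0 := (hasDerivAt_pow 2 s).const_mul (C / 2)
          refine h0.congr_deriv ?_
          push_cast
          ring
        exact ((hg s hs).sub hq).continuousAt.continuousWithinAt
      · intro s hs
        rw [interior_Icc] at hs
        have hq : HasDerivAt (fun s : ℝ => C / 2 * s ^ 2) (C * s) s := by
          have h0 := (hasDerivAt_pow 2 s).const_mul (C / 2)
          refine h0.congr_deriv ?_
          push_cast
          ring
        exact ((hg s (Ioo_subset_Icc_self hs)).sub hq).hasDerivWithinAt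
      · intro s hs
        rw [interior_Icc] at hs
        have := stepA1 s (Ioo_subset_Icc_self hs)
        linarith
    have := hmono (left_mem_Icc.mpr zero_le_one) (right_mem_Icc.mpr zero_le_one)
      zero_le_one
    have hL0 : L 0 = w := by simp [hL]
    have hL1 : L 1 = u₀ := by simp [hL, hh]
    simp only [hL0, hL1] at this
    have hCC : C / 2 = α / 4 * ‖h‖ ^ 2 := by rw [hC]; ring
    nlinarith [this]
  -- Part B : upper bound
  set e : M →L[ℝ] X × M := ContinuousLinearMap.inr ℝ X M with he
  have hFd : ∀ v ∈ U, ∀ ν ∈ Metric.ball μ₀ δ,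
      HasFDerivAt (fun ν' => J v ν') ((DJ (v, ν)).comp e) ν := by
    intro v hv ν hν
    have hνO : ν ∈ O := hballO (Metric.ball_subset_ball hδδO hν)
    have hdiff : DifferentiableAt ℝ Jp (v, ν) :=
      (hJC1.differentiableOn one_ne_zero).differentiableAt (hUO.mem_nhds ⟨hv, hνO⟩)
    have h1 : HasFDerivAt Jp (DJ (v, ν)) (v, ν) := hdiff.hasFDerivAt
    have h2 : HasFDerivAt (fun ν' : M => ((v, ν') : X × M)) e ν :=
      HasFDerivAt.prodMk (hasFDerivAt_const v ν) (hasFDerivAt_id ν)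
    exact h1.comp ν h2
  set F : M → ℝ := fun ν => J u₀ ν - J w ν with hF
  set F' : M → (M →L[ℝ] ℝ) := fun ν => (DJ (u₀, ν)).comp e - (DJ (w, ν)).comp e
    with hF'
  have hFderiv : ∀ ν ∈ Metric.ball μ₀ δ, HasFDerivWithinAt F (F' ν)
      (Metric.ball μ₀ δ) ν := by
    intro ν hν
    exact ((hFd u₀ hu₀U ν hν).sub (hFd w hwU ν hν)).hasFDerivWithinAt
  have hFbound : ∀ ν ∈ Metric.ball μ₀ δ, ‖F' ν‖ ≤ ε := by
    intro ν hν
    have hνd : dist ν μ₀ < δ := hν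
    have h1 : ‖DJ (u₀, ν) - DJ (u₀, μ₀)‖ < ε / 2 := by
      apply hDJball
      rw [Prod.dist_eq]
      apply max_lt
      · simpa using hδ₂
      · exact lt_of_lt_of_le hνd hδδ₂
    have h2 : ‖DJ (w, ν) - DJ (u₀, μ₀)‖ < ε / 2 := by
      apply hDJball
      rw [Prod.dist_eq]
      apply max_lt
      · rw [dist_eq_norm]; exact lt_of_lt_of_le hwu₀ hρδ₂
      · exact lt_of_lt_of_le hνd hδδ₂
    have hdiff : ‖DJ (u₀, ν) - DJ (w, ν)‖ < ε := by
      calc ‖DJ (u₀, ν) - DJ (w, ν)‖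
          ≤ ‖DJ (u₀, ν) - DJ (u₀, μ₀)‖ + ‖DJ (w, ν) - DJ (u₀, μ₀)‖ := by
            have := norm_sub_le (DJ (u₀, ν) - DJ (u₀, μ₀)) (DJ (w, ν) - DJ (u₀, μ₀))
            simpa using this
        _ < ε / 2 + ε / 2 := add_lt_add h1 h2
        _ = ε := by ring
    have heq : F' ν = (DJ (u₀, ν) - DJ (w, ν)).comp e := by
      rw [hF', ContinuousLinearMap.sub_comp]
    rw [heq]
    apply ContinuousLinearMap.opNorm_le_bound _ hε.le
    intro x
    have hex : ‖e x‖ = ‖x‖ := by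
      simp [he, Prod.norm_def]
    calc ‖(DJ (u₀, ν) - DJ (w, ν)) (e x)‖
        ≤ ‖DJ (u₀, ν) - DJ (w, ν)‖ * ‖e x‖ :=
          (DJ (u₀, ν) - DJ (w, ν)).le_opNorm (e x)
      _ = ‖DJ (u₀, ν) - DJ (w, ν)‖ * ‖x‖ := by rw [hex]
      _ ≤ ε * ‖x‖ := mul_le_mul_of_nonneg_right hdiff.le (norm_nonneg _)
  have hMVT : ‖F μ - F μ₀‖ ≤ ε * ‖μ - μ₀‖ :=
    (convex_ball μ₀ δ).norm_image_sub_le_of_norm_hasFDerivWithin_le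
      hFderiv hFbound (Metric.mem_ball_self hδ) hμball
  have hFμ₀ : F μ₀ ≤ 0 := by
    have := humin μ₀ hμ₀O₀ w hwU₀
    rw [hu₀] at this
    simp only [hF]
    linarith
  have hFμ : F μ ≤ ε * ‖μ - μ₀‖ := by
    have habs := (abs_le.mp (by rwa [Real.norm_eq_abs] at hMVT)).2
    linarith
  -- combine
  have hkey : α / 4 * ‖h‖ ^ 2 ≤ ε * ‖μ - μ₀‖ := by
    have : α / 4 * ‖h‖ ^ 2 ≤ F μ := by
      simp only [hF]; linarith [stepA2]
    exact this.trans hFμ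
  have hsq : ‖h‖ ^ 2 ≤ c ^ 2 * ‖μ - μ₀‖ := by
    have hz : ε * ‖μ - μ₀‖ = α / 4 * (c ^ 2 * ‖μ - μ₀‖) := by rw [hεdef]; ring
    rw [hz] at hkey
    have h4 : (0:ℝ) < α / 4 := by positivity
    exact (mul_le_mul_iff_right₀ h4).mp hkey
  have hgoal : ‖h‖ ≤ c * Real.sqrt ‖μ - μ₀‖ := by
    calc ‖h‖ = Real.sqrt (‖h‖ ^ 2) := (Real.sqrt_sq (norm_nonneg _)).symm
      _ ≤ Real.sqrt (c ^ 2 * ‖μ - μ₀‖) := Real.sqrt_le_sqrt hsq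
      _ = c * Real.sqrt ‖μ - μ₀‖ := by
          rw [Real.sqrt_mul (sq_nonneg c), Real.sqrt_sq hc.le]
  rw [Real.norm_of_nonneg (Real.sqrt_nonneg _)]
  have : ‖u μ - u₀‖ = ‖h‖ := by rw [hh, ← hw, norm_sub_rev]
  rw [this]
  exact hgoal
end

section
/- Under the hypotheses of the local-minimizer existence theorem with ∂_X J ∈ C¹(U × O, X'), the Fréchet derivative of the minimizer map is u'(μ) = −Λ(μ) h₀(μ), where h₀(μ) := ∂_M ∂_X J(u(μ),μ) ∈ B(M,X') and Λ(μ) ∈ B(X',X) is the inverse of ∂_X² J(u(μ),μ) regarded as an isomorphism X → X' (i.e. ∂_X² J(u(μ),μ)[Λ(μ)h, w] = h[w] for all w ∈ X, h ∈ X'). -/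
open Set Filter Topology

open Asymptotics in
theorem aux_implicit_deriv {X M : Type*} [NormedAddCommGroup X] [NormedSpace ℝ X]
    [NormedAddCommGroup M] [NormedSpace ℝ M]
    {F : X × M → (X →L[ℝ] ℝ)} {u : M → X} {μ : M}
    {A : X →L[ℝ] X →L[ℝ] ℝ} {h₀ : M →L[ℝ] X →L[ℝ] ℝ} {Lam : (X →L[ℝ] ℝ) →L[ℝ] X}
    (hF : HasFDerivAt F (A.comp (ContinuousLinearMap.fst ℝ X M)
        + h₀.comp (ContinuousLinearMap.snd ℝ X M)) (u μ, μ))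
    (hu : ContinuousAt u μ)
    (hzero : ∀ᶠ ν in 𝓝 μ, F (u ν, ν) = 0)
    (hleft : ∀ x, Lam (A x) = x) :
    HasFDerivAt u (-(Lam.comp h₀)) μ := by
  have hφ : ContinuousAt (fun ν => (u ν, ν)) μ := hu.prodMk continuousAt_id
  have hFo := hF.isLittleO
  have hg0 := hFo.comp_tendsto hφ
  have hg : (fun ν => A (u ν - u μ) + h₀ (ν - μ)) =o[𝓝 μ]
      fun ν => ((u ν - u μ, ν - μ) : X × M) := by
    have hF0 : F (u μ, μ) = 0 := hzero.self_of_nhds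
    refine (hg0.neg_left.congr' ?_ ?_)
    · filter_upwards [hzero] with ν hν
      simp [Function.comp, hν, hF0, Prod.mk_sub_mk]
    · filter_upwards with ν
      simp [Function.comp, Prod.mk_sub_mk]
  set g : M → (X →L[ℝ] ℝ) := fun ν => A (u ν - u μ) + h₀ (ν - μ) with hgdef
  set e : M → X := fun ν => u ν - u μ + Lam (h₀ (ν - μ)) with hedef
  have he_eq : ∀ ν, e ν = Lam (g ν) := by
    intro ν
    simp [hedef, hgdef, map_add, hleft]
  have heO : e =O[𝓝 μ] g := by
    refine IsBigO.of_bound ‖Lam‖ (Eventually.of_forall fun ν => ?_)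
    rw [he_eq ν]; exact Lam.le_opNorm _
  -- the pair is O of (ν - μ)
  have hpair : (fun ν => ((u ν - u μ, ν - μ) : X × M)) =O[𝓝 μ] fun ν => ν - μ := by
    set ε : ℝ := 1 / (2 * (‖Lam‖ + 1)) with hε
    have hLamnn : (0:ℝ) ≤ ‖Lam‖ := ContinuousLinearMap.opNorm_nonneg Lam
    have hεpos : 0 < ε := by positivity
    have hsmall := hg.def hεpos
    set C₁ : ℝ := ‖Lam.comp h₀‖ with hC₁
    have hC₁nn : (0:ℝ) ≤ C₁ := ContinuousLinearMap.opNorm_nonneg _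
    have hLε : ‖Lam‖ * ε ≤ 1 / 2 := by
      rw [hε, mul_one_div, div_le_div_iff₀ (by positivity) (by norm_num)]
      nlinarith
    refine IsBigO.of_bound (2 + 2 * C₁) ?_
    filter_upwards [hsmall] with ν hν
    set a := ‖u ν - u μ‖ with hadef
    set b := ‖ν - μ‖ with hbdef
    have hann : 0 ≤ a := norm_nonneg _
    have hbnn : 0 ≤ b := norm_nonneg _
    have hgb : ‖g ν‖ ≤ ε * max a b := by
      simpa [Prod.norm_def, hadef, hbdef] using hν
    have hmax : max a b ≤ a + b :=
      max_le (le_add_of_nonneg_right hbnn) (le_add_of_nonneg_left hann)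
    have hgb' : ‖g ν‖ ≤ ε * (a + b) :=
      hgb.trans (mul_le_mul_of_nonneg_left hmax hεpos.le)
    have heb : ‖e ν‖ ≤ ‖Lam‖ * ‖g ν‖ := by rw [he_eq ν]; exact Lam.le_opNorm _
    have hdu : a ≤ ‖e ν‖ + C₁ * b := by
      have hue : u ν - u μ = e ν - Lam (h₀ (ν - μ)) := by simp [hedef]
      rw [hadef, hue]
      refine (norm_sub_le _ _).trans ?_
      gcongr
      exact (Lam.comp h₀).le_opNorm _
    have h4 : ‖Lam‖ * ε * (a + b) ≤ (1/2) * (a + b) :=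
      mul_le_mul_of_nonneg_right hLε (by linarith)
    have h5 : ‖Lam‖ * ‖g ν‖ ≤ ‖Lam‖ * ε * (a + b) := by
      rw [mul_assoc]
      exact mul_le_mul_of_nonneg_left hgb' hLamnn
    have hring : (1 + 2 * C₁) * b = b + 2 * (C₁ * b) := by ring
    have hring2 : (2 + 2 * C₁) * b = 2 * b + 2 * (C₁ * b) := by ring
    have hcb : 0 ≤ C₁ * b := mul_nonneg hC₁nn hbnn
    have key : a ≤ (1 + 2 * C₁) * b := by rw [hring]; linarith
    rw [Prod.norm_def]
    refine max_le (key.trans (by rw [hring, hring2]; linarith))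
      (by rw [hring2]; linarith)
  have he : e =o[𝓝 μ] fun ν => ν - μ := heO.trans_isLittleO (hg.trans_isBigO hpair)
  refine hasFDerivAt_iff_isLittleO.mpr ?_
  refine he.congr' ?_ (by rfl)
  filter_upwards with ν
  simp [hedef, sub_eq_add_neg]

/-- **Derivative of the minimizer map** (Proposition 2.8 of Kimura–Wakano).
Under the hypotheses of the local-minimizer existence theorem with
`∂_X J ∈ C¹(U × O, X')` (encoded through the partial derivatives `DXXJ` of
`∂_X J` in `X` and `DMDXJ = ∂_M ∂_X J` in `M`, jointly `C¹`), the Fréchet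
derivative of the minimizer map is `u'(μ) = −Λ(μ) h₀(μ)` where
`h₀(μ) = ∂_M ∂_X J(u μ, μ) ∈ B(M,X')` and `Λ(μ) ∈ B(X',X)` is the inverse of
`∂_X² J(u μ, μ)` regarded as an isomorphism `X → X'` (i.e.
`∂_X² J(u μ, μ)[Λ(μ)h, w] = h[w]` for all `w ∈ X`, `h ∈ X'`). -/
theorem minimizer_derivative_formula
    {X M : Type*} [NormedAddCommGroup X] [NormedSpace ℝ X] [CompleteSpace X]
    [NormedAddCommGroup M] [NormedSpace ℝ M] [CompleteSpace M]
    (U : Set X) (O : Set M) (hU : IsOpen U) (hO : IsOpen O)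
    (J : X → M → ℝ) (DXJ : X → M → (X →L[ℝ] ℝ))
    (DXXJ : X → M → (X →L[ℝ] X →L[ℝ] ℝ))
    (DMDXJ : X → M → (M →L[ℝ] X →L[ℝ] ℝ))
    (u₀ : X) (μ₀ : M) (hu₀U : u₀ ∈ U) (hμ₀O : μ₀ ∈ O)
    (hJd1 : ∀ μ ∈ O, ∀ w ∈ U, HasFDerivAt (fun v => J v μ) (DXJ w μ) w)
    (hJd2 : ∀ μ ∈ O, ∀ w ∈ U, HasFDerivAt (fun v => DXJ v μ) (DXXJ w μ) w)
    (hJdM : ∀ w ∈ U, ∀ μ ∈ O, HasFDerivAt (fun ν => DXJ w ν) (DMDXJ w μ) μ)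
    -- `∂_X J ∈ C¹(U × O, X')`
    (hDX1 : ContDiffOn ℝ 1 (fun p : X × M => DXJ p.1 p.2) (U ×ˢ O))
    (hcrit : DXJ u₀ μ₀ = 0)
    (α : ℝ) (hα : 0 < α)
    (hcoer : ∀ w : X, α * ‖w‖ ^ 2 ≤ DXXJ u₀ μ₀ w w)
    -- the minimizer map from the local-minimizer existence theorem
    (U₀ : Set X) (O₀ : Set M) (u : M → X)
    (hU₀ : IsOpen U₀) (hO₀ : IsOpen O₀) (hu₀U₀ : u₀ ∈ U₀) (hμ₀O₀ : μ₀ ∈ O₀)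
    (hU₀U : U₀ ⊆ U) (hO₀O : O₀ ⊆ O)
    (hu : ContinuousOn u O₀) (huU₀ : MapsTo u O₀ U₀) (hu₀ : u μ₀ = u₀)
    (hucrit : ∀ μ ∈ O₀, DXJ (u μ) μ = 0)
    (humin : ∀ μ ∈ O₀, ∀ w ∈ U₀, J (u μ) μ ≤ J w μ)
    -- `Λ μ` : the inverse of `∂_X² J (u μ, μ) : X → X'` given by Lax–Milgram
    (Λ : M → ((X →L[ℝ] ℝ) →L[ℝ] X))
    (hΛ : ∀ μ ∈ O₀, ∀ (h : X →L[ℝ] ℝ) (w : X), DXXJ (u μ) μ (Λ μ h) w = h w) :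
    ∀ μ ∈ O₀, HasFDerivAt u (-((Λ μ).comp (DMDXJ (u μ) μ))) μ := by
  intro μ hμ
  have haU₀ : u μ ∈ U₀ := huU₀ hμ
  have haU : u μ ∈ U := hU₀U haU₀
  have hμO : μ ∈ O := hO₀O hμ
  -- symmetry of the second derivative
  have hsymm : ∀ v w : X, DXXJ (u μ) μ v w = DXXJ (u μ) μ w v := by
    apply second_derivative_symmetric_of_eventually (f := fun v => J v μ)
      (f' := fun v => DXJ v μ)
    · filter_upwards [hU.mem_nhds haU] with y hy using hJd1 μ hμO y hy
    · exact hJd2 μ hμO (u μ) haU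
  -- A is injective
  have hAinj : ∀ x : X, DXXJ (u μ) μ x = 0 → x = 0 := by
    intro x hx
    apply NormedSpace.eq_zero_of_forall_dual_eq_zero ℝ
    intro f
    have hf : f = DXXJ (u μ) μ (Λ μ f) := by
      ext w; exact (hΛ μ hμ f w).symm
    calc f x = DXXJ (u μ) μ (Λ μ f) x := by rw [← hf]
      _ = DXXJ (u μ) μ x (Λ μ f) := hsymm _ _
      _ = 0 := by rw [hx]; rfl
  -- Λ μ is a left inverse of A
  have hleft : ∀ x : X, Λ μ (DXXJ (u μ) μ x) = x := by
    intro x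
    have h1 : DXXJ (u μ) μ (Λ μ (DXXJ (u μ) μ x) - x) = 0 := by
      ext w
      simp only [map_sub, ContinuousLinearMap.sub_apply,
        ContinuousLinearMap.zero_apply]
      rw [hΛ μ hμ (DXXJ (u μ) μ x) w]
      ring
    have h2 := hAinj _ h1
    exact sub_eq_zero.mp h2
  -- the full derivative of F
  have hFd : HasFDerivAt (fun p : X × M => DXJ p.1 p.2)
      (fderiv ℝ (fun p : X × M => DXJ p.1 p.2) (u μ, μ)) (u μ, μ) := by
    refine DifferentiableAt.hasFDerivAt ?_
    exact ((hDX1.differentiableOn one_ne_zero).differentiableAt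
      ((hU.prod hO).mem_nhds ⟨haU, hμO⟩))
  set L := fderiv ℝ (fun p : X × M => DXJ p.1 p.2) (u μ, μ) with hL
  have hpart1 : L.comp ((ContinuousLinearMap.id ℝ X).prod 0) = DXXJ (u μ) μ := by
    have hc : HasFDerivAt (fun v : X => ((v, μ) : X × M))
        ((ContinuousLinearMap.id ℝ X).prod 0) (u μ) :=
      (hasFDerivAt_id (u μ)).prodMk (hasFDerivAt_const μ (u μ))
    have := hFd.comp (u μ) hc
    exact this.unique (hJd2 μ hμO (u μ) haU)
  have hpart2 : L.comp ((0 : M →L[ℝ] X).prod (ContinuousLinearMap.id ℝ M))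
      = DMDXJ (u μ) μ := by
    have hc : HasFDerivAt (fun ν : M => ((u μ, ν) : X × M))
        ((0 : M →L[ℝ] X).prod (ContinuousLinearMap.id ℝ M)) μ :=
      (hasFDerivAt_const (u μ) μ).prodMk (hasFDerivAt_id μ)
    have := hFd.comp μ hc
    exact this.unique (hJdM (u μ) haU μ hμO)
  have hLeq : L = (DXXJ (u μ) μ).comp (ContinuousLinearMap.fst ℝ X M)
      + (DMDXJ (u μ) μ).comp (ContinuousLinearMap.snd ℝ X M) := by
    refine ContinuousLinearMap.ext fun p => ?_
    obtain ⟨v, m⟩ := p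
    have hvm : ((v, m) : X × M) = (v, 0) + (0, m) := by simp
    rw [hvm, map_add]
    have e1 : L (v, 0) = DXXJ (u μ) μ v := by
      rw [← hpart1]; rfl
    have e2 : L (0, m) = DMDXJ (u μ) μ m := by
      rw [← hpart2]; rfl
    rw [e1, e2]
    simp
  have hF : HasFDerivAt (fun p : X × M => DXJ p.1 p.2)
      ((DXXJ (u μ) μ).comp (ContinuousLinearMap.fst ℝ X M)
        + (DMDXJ (u μ) μ).comp (ContinuousLinearMap.snd ℝ X M)) (u μ, μ) :=
    hLeq ▸ hFd
  exact aux_implicit_deriv hF (hu.continuousAt (hO₀.mem_nhds hμ))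
    (by filter_upwards [hO₀.mem_nhds hμ] with ν hν using hucrit ν hν) hleft
end

section
/- Under the hypotheses of the local-minimizer existence theorem with J ∈ C²(U × O), the minimum-value function J_*(μ) = J(u(μ),μ) is C² on O₀ and its second Fréchet derivative satisfies J_*''(μ)[μ₁,μ₂] = ∂_M² J(u(μ),μ)[μ₁,μ₂] − ⟨Λ(μ) h₀(μ)[μ₁], h₀(μ)[μ₂]⟩ for all μ₁, μ₂ ∈ M, where h₀(μ) = ∂_M ∂_X J(u(μ),μ) and Λ(μ) is the inverse of ∂_X² J(u(μ),μ). -/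
open Set Filter Topology

open ContinuousLinearMap in
set_option maxHeartbeats 4000000 in
/-- **Second derivative of the minimum value** (Proposition 2.9 of
Kimura–Wakano).  Under the hypotheses of the local-minimizer existence theorem
with `J ∈ C²(U × O)` (partial derivatives `DXJ = ∂_X J`, `DMJ = ∂_M J`,
`DXXJ = ∂_X² J`, `DMDXJ = ∂_M ∂_X J`, `DMMJ = ∂_M² J`), the minimum-value
function `J_*(μ) = J (u μ) μ` is `C²` on `O₀`: its first derivative is
`J_*'(μ) = ∂_M J(u μ, μ)`, and its second derivative satisfies
`J_*''(μ)[μ₁,μ₂] = ∂_M² J(u μ, μ)[μ₁,μ₂] − ⟨Λ(μ) h₀(μ)[μ₁], h₀(μ)[μ₂]⟩`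
where `h₀(μ) = ∂_M ∂_X J(u μ, μ)` and `Λ(μ)` is the inverse of
`∂_X² J(u μ, μ)`; the duality pairing `⟨x, h⟩` for `x ∈ X`, `h ∈ X'` is `h x`. -/
theorem minimum_value_second_derivative
    {X M : Type*} [NormedAddCommGroup X] [NormedSpace ℝ X] [CompleteSpace X]
    [NormedAddCommGroup M] [NormedSpace ℝ M] [CompleteSpace M]
    (U : Set X) (O : Set M) (hU : IsOpen U) (hO : IsOpen O)
    (J : X → M → ℝ) (DXJ : X → M → (X →L[ℝ] ℝ)) (DMJ : X → M → (M →L[ℝ] ℝ))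
    (DXXJ : X → M → (X →L[ℝ] X →L[ℝ] ℝ))
    (DMDXJ : X → M → (M →L[ℝ] X →L[ℝ] ℝ))
    (DMMJ : X → M → (M →L[ℝ] M →L[ℝ] ℝ))
    (u₀ : X) (μ₀ : M) (hu₀U : u₀ ∈ U) (hμ₀O : μ₀ ∈ O)
    (hJd1 : ∀ μ ∈ O, ∀ w ∈ U, HasFDerivAt (fun v => J v μ) (DXJ w μ) w)
    (hJdM : ∀ w ∈ U, ∀ μ ∈ O, HasFDerivAt (fun ν => J w ν) (DMJ w μ) μ)
    (hJd2 : ∀ μ ∈ O, ∀ w ∈ U, HasFDerivAt (fun v => DXJ v μ) (DXXJ w μ) w)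
    (hJdMX : ∀ w ∈ U, ∀ μ ∈ O, HasFDerivAt (fun ν => DXJ w ν) (DMDXJ w μ) μ)
    (hJdMM : ∀ w ∈ U, ∀ μ ∈ O, HasFDerivAt (fun ν => DMJ w ν) (DMMJ w μ) μ)
    -- `J ∈ C²(U × O)`
    (hJC2 : ContDiffOn ℝ 2 (fun p : X × M => J p.1 p.2) (U ×ˢ O))
    (hcrit : DXJ u₀ μ₀ = 0)
    (α : ℝ) (hα : 0 < α)
    (hcoer : ∀ w : X, α * ‖w‖ ^ 2 ≤ DXXJ u₀ μ₀ w w)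
    -- the minimizer map from the local-minimizer existence theorem
    (U₀ : Set X) (O₀ : Set M) (u : M → X)
    (hU₀ : IsOpen U₀) (hO₀ : IsOpen O₀) (hu₀U₀ : u₀ ∈ U₀) (hμ₀O₀ : μ₀ ∈ O₀)
    (hU₀U : U₀ ⊆ U) (hO₀O : O₀ ⊆ O)
    (hu : ContinuousOn u O₀) (huU₀ : MapsTo u O₀ U₀) (hu₀ : u μ₀ = u₀)
    (hucrit : ∀ μ ∈ O₀, DXJ (u μ) μ = 0)
    (humin : ∀ μ ∈ O₀, ∀ w ∈ U₀, J (u μ) μ ≤ J w μ)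
    -- `Λ μ` : the inverse of `∂_X² J (u μ, μ) : X → X'` given by Lax–Milgram
    (Λ : M → ((X →L[ℝ] ℝ) →L[ℝ] X))
    (hΛ : ∀ μ ∈ O₀, ∀ (h : X →L[ℝ] ℝ) (w : X), DXXJ (u μ) μ (Λ μ h) w = h w) :
    ∃ J2 : M → (M →L[ℝ] M →L[ℝ] ℝ),
      ContinuousOn J2 O₀ ∧
      ∀ μ ∈ O₀,
        HasFDerivAt (fun ν => J (u ν) ν) (DMJ (u μ) μ) μ ∧
        HasFDerivAt (fun ν => DMJ (u ν) ν) (J2 μ) μ ∧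
        ∀ μ₁ μ₂ : M,
          J2 μ μ₁ μ₂ =
            DMMJ (u μ) μ μ₁ μ₂ - DMDXJ (u μ) μ μ₂ (Λ μ (DMDXJ (u μ) μ μ₁)) := by
  classical
  set JJ : X × M → ℝ := fun p => J p.1 p.2 with hJJdef
  have hUO : IsOpen (U ×ˢ O) := hU.prod hO
  have hJJc2 : ∀ p ∈ U ×ˢ O, ContDiffAt ℝ 2 JJ p := fun p hp =>
    hJC2.contDiffAt (hUO.mem_nhds hp)
  have hfd1 : ∀ p ∈ U ×ˢ O, ContDiffAt ℝ 1 (fderiv ℝ JJ) p := fun p hp =>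
    (hJJc2 p hp).fderiv_right (by norm_num)
  have hJJdiff : ∀ p ∈ U ×ˢ O, HasFDerivAt JJ (fderiv ℝ JJ p) p := fun p hp =>
    ((hJJc2 p hp).differentiableAt (by norm_num)).hasFDerivAt
  have hcompinl : ∀ p ∈ U ×ˢ O,
      (fderiv ℝ JJ p).comp (ContinuousLinearMap.inl ℝ X M) = DXJ p.1 p.2 := by
    intro p hp
    exact (HasFDerivAt.comp (f := fun e : X => (e, p.2)) p.1 (hJJdiff p hp) (hasFDerivAt_prodMk_left p.1 p.2)).unique
      (hJd1 p.2 hp.2 p.1 hp.1)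
  have hcompinr : ∀ p ∈ U ×ˢ O,
      (fderiv ℝ JJ p).comp (ContinuousLinearMap.inr ℝ X M) = DMJ p.1 p.2 := by
    intro p hp
    exact (HasFDerivAt.comp (f := fun e : M => (p.1, e)) p.2 (hJJdiff p hp) (hasFDerivAt_prodMk_right p.1 p.2)).unique
      (hJdM p.1 hp.1 p.2 hp.2)
  have happly : ∀ p ∈ U ×ˢ O, ∀ x m,
      fderiv ℝ JJ p (x, m) = DXJ p.1 p.2 x + DMJ p.1 p.2 m := by
    intro p hp x m
    have h : (x, m) = ((x, 0) : X × M) + (0, m) := by simp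
    rw [h, map_add, ← hcompinl p hp, ← hcompinr p hp]; rfl
  -- second derivative of the joint function
  set Bf : X × M → ((X × M) →L[ℝ] (X × M) →L[ℝ] ℝ) := fderiv ℝ (fderiv ℝ JJ) with hBfdef
  have hBdiff : ∀ p ∈ U ×ˢ O, HasFDerivAt (fderiv ℝ JJ) (Bf p) p := fun p hp =>
    ((hfd1 p hp).differentiableAt (by norm_num)).hasFDerivAt
  have hBsymm : ∀ p ∈ U ×ˢ O, ∀ v w, Bf p v w = Bf p w v := by
    intro p hp v w
    exact second_derivative_symmetric_of_eventually
      (Filter.eventually_of_mem (hUO.mem_nhds hp) hJJdiff) (hBdiff p hp) v w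
  set R₁ : ((X × M) →L[ℝ] ℝ) →L[ℝ] (X →L[ℝ] ℝ) :=
    (ContinuousLinearMap.compL ℝ X (X × M) ℝ).flip (ContinuousLinearMap.inl ℝ X M) with hR₁def
  set R₂ : ((X × M) →L[ℝ] ℝ) →L[ℝ] (M →L[ℝ] ℝ) :=
    (ContinuousLinearMap.compL ℝ M (X × M) ℝ).flip (ContinuousLinearMap.inr ℝ X M) with hR₂def
  have hR₁apply : ∀ (h : (X × M) →L[ℝ] ℝ) (x : X), R₁ h x = h (x, 0) := by
    intro h x; simp [hR₁def]
  have hR₂apply : ∀ (h : (X × M) →L[ℝ] ℝ) (m : M), R₂ h m = h (0, m) := by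
    intro h m; simp [hR₂def]
  set L₁ : (X →L[ℝ] ℝ) →L[ℝ] ((X × M) →L[ℝ] ℝ) :=
    (ContinuousLinearMap.compL ℝ (X × M) X ℝ).flip (ContinuousLinearMap.fst ℝ X M) with hL₁def
  set L₂ : (M →L[ℝ] ℝ) →L[ℝ] ((X × M) →L[ℝ] ℝ) :=
    (ContinuousLinearMap.compL ℝ (X × M) M ℝ).flip (ContinuousLinearMap.snd ℝ X M) with hL₂def
  have hL₁apply : ∀ (h : X →L[ℝ] ℝ) (q : X × M), L₁ h q = h q.1 := by
    intro h q; simp [hL₁def]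
  have hL₂apply : ∀ (h : M →L[ℝ] ℝ) (q : X × M), L₂ h q = h q.2 := by
    intro h q; simp [hL₂def]
  have hfdeq : ∀ p ∈ U ×ˢ O,
      fderiv ℝ JJ p = L₁ (DXJ p.1 p.2) + L₂ (DMJ p.1 p.2) := by
    intro p hp
    refine ContinuousLinearMap.ext fun q => ?_
    rw [show q = (q.1, q.2) from rfl, happly p hp]
    simp [hL₁apply, hL₂apply]
  -- M-slice of the second derivative
  have hBr : ∀ p ∈ U ×ˢ O, ∀ m : M, ∀ q : X × M,
      Bf p (0, m) q = DMDXJ p.1 p.2 m q.1 + DMMJ p.1 p.2 m q.2 := by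
    intro p hp m q
    have hcurve : HasFDerivAt (fun t : M => fderiv ℝ JJ (p.1, t))
        ((Bf p).comp (ContinuousLinearMap.inr ℝ X M)) p.2 :=
      (hBdiff p hp).comp p.2 (hasFDerivAt_prodMk_right p.1 p.2)
    have hev : (fun t : M => L₁ (DXJ p.1 t) + L₂ (DMJ p.1 t)) =ᶠ[𝓝 p.2]
        (fun t : M => fderiv ℝ JJ (p.1, t)) := by
      filter_upwards [hO.mem_nhds hp.2] with t ht
      exact (hfdeq (p.1, t) ⟨hp.1, ht⟩).symm
    have hslice : HasFDerivAt (fun t : M => L₁ (DXJ p.1 t) + L₂ (DMJ p.1 t))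
        ((Bf p).comp (ContinuousLinearMap.inr ℝ X M)) p.2 :=
      hcurve.congr_of_eventuallyEq hev
    have hslice2 : HasFDerivAt (fun t : M => L₁ (DXJ p.1 t) + L₂ (DMJ p.1 t))
        (L₁.comp (DMDXJ p.1 p.2) + L₂.comp (DMMJ p.1 p.2)) p.2 :=
      (L₁.hasFDerivAt.comp p.2 (hJdMX p.1 hp.1 p.2 hp.2)).add
        (L₂.hasFDerivAt.comp p.2 (hJdMM p.1 hp.1 p.2 hp.2))
    have heq2 := hslice.unique hslice2
    have h0 : Bf p (0, m) q = ((Bf p).comp (ContinuousLinearMap.inr ℝ X M)) m q := by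
      simp
    rw [h0, heq2]
    simp [hL₁apply, hL₂apply]
  -- X-slice
  have hB1 : ∀ p ∈ U ×ˢ O, ∀ x x' : X,
      Bf p (x, 0) (x', 0) = DXXJ p.1 p.2 x x' := by
    intro p hp x x'
    have hcurve : HasFDerivAt (fun s : X => fderiv ℝ JJ (s, p.2))
        ((Bf p).comp (ContinuousLinearMap.inl ℝ X M)) p.1 :=
      (hBdiff p hp).comp p.1 (hasFDerivAt_prodMk_left p.1 p.2)
    have hR : HasFDerivAt (fun s : X => R₁ (fderiv ℝ JJ (s, p.2)))
        (R₁.comp ((Bf p).comp (ContinuousLinearMap.inl ℝ X M))) p.1 :=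
      R₁.hasFDerivAt.comp p.1 hcurve
    have hev : (fun s : X => DXJ s p.2) =ᶠ[𝓝 p.1]
        (fun s : X => R₁ (fderiv ℝ JJ (s, p.2))) := by
      filter_upwards [hU.mem_nhds hp.1] with s hs
      refine ContinuousLinearMap.ext fun x'' => ?_
      rw [hR₁apply, ← hcompinl (s, p.2) ⟨hs, hp.2⟩]
      rfl
    have hDXXd : HasFDerivAt (fun s : X => DXJ s p.2)
        (R₁.comp ((Bf p).comp (ContinuousLinearMap.inl ℝ X M))) p.1 :=
      hR.congr_of_eventuallyEq hev
    have heq2 := (hJd2 p.2 hp.2 p.1 hp.1).unique hDXXd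
    have h3 : DXXJ p.1 p.2 x x' =
        (R₁.comp ((Bf p).comp (ContinuousLinearMap.inl ℝ X M))) x x' := by rw [← heq2]
    rw [h3]
    simp [hR₁apply]
  -- primed versions with explicit pairs
  have hB1' : ∀ w ∈ U, ∀ ν ∈ O, ∀ x x' : X, Bf (w, ν) (x, 0) (x', 0) = DXXJ w ν x x' :=
    fun w hw ν hν x x' => hB1 (w, ν) ⟨hw, hν⟩ x x'
  have hBr' : ∀ w ∈ U, ∀ ν ∈ O, ∀ m : M, ∀ q : X × M,
      Bf (w, ν) (0, m) q = DMDXJ w ν m q.1 + DMMJ w ν m q.2 :=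
    fun w hw ν hν m q => hBr (w, ν) ⟨hw, hν⟩ m q
  have hγmem : ∀ μ ∈ O₀, ((u μ, μ) : X × M) ∈ U ×ˢ O := fun μ hμ =>
    ⟨hU₀U (huU₀ hμ), hO₀O hμ⟩
  -- symmetry of DXXJ along the minimizer, left inverse of Λ
  have hXXsymm : ∀ μ ∈ O₀, ∀ x x' : X, DXXJ (u μ) μ x x' = DXXJ (u μ) μ x' x := by
    intro μ hμ x x'
    rw [← hB1' (u μ) (hγmem μ hμ).1 μ (hγmem μ hμ).2 x x',
      ← hB1' (u μ) (hγmem μ hμ).1 μ (hγmem μ hμ).2 x' x,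
      hBsymm (u μ, μ) (hγmem μ hμ)]
  have hΛleft : ∀ μ ∈ O₀, ∀ x : X, Λ μ (DXXJ (u μ) μ x) = x := by
    intro μ hμ x
    have hsub : DXXJ (u μ) μ (Λ μ (DXXJ (u μ) μ x) - x) = 0 := by
      refine ContinuousLinearMap.ext fun w => ?_
      rw [map_sub]
      simp [hΛ μ hμ (DXXJ (u μ) μ x) w]
    have hz : Λ μ (DXXJ (u μ) μ x) - x = 0 := by
      apply NormedSpace.eq_zero_of_forall_dual_eq_zero ℝ
      intro g
      have h1 : DXXJ (u μ) μ (Λ μ g) (Λ μ (DXXJ (u μ) μ x) - x) =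
          g (Λ μ (DXXJ (u μ) μ x) - x) := hΛ μ hμ g _
      rw [← h1, hXXsymm μ hμ, hsub]
      simp
    exact sub_eq_zero.1 hz
  have hΛright : ∀ μ ∈ O₀, ∀ h : X →L[ℝ] ℝ, DXXJ (u μ) μ (Λ μ h) = h := by
    intro μ hμ h
    exact ContinuousLinearMap.ext fun w => hΛ μ hμ h w
  -- definition of the second derivative of the minimum value
  set J2 : M → (M →L[ℝ] M →L[ℝ] ℝ) := fun μ =>
    DMMJ (u μ) μ - ((DMDXJ (u μ) μ).flip.comp ((Λ μ).comp (DMDXJ (u μ) μ))) with hJ2def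
  have hJ2apply : ∀ μ μ₁ μ₂, J2 μ μ₁ μ₂ =
      DMMJ (u μ) μ μ₁ μ₂ - DMDXJ (u μ) μ μ₂ (Λ μ (DMDXJ (u μ) μ μ₁)) := by
    intro μ μ₁ μ₂
    simp [hJ2def]
  -- the main per-point analysis
  have main : ∀ μ ∈ O₀,
      HasFDerivAt (fun ν => J (u ν) ν) (DMJ (u μ) μ) μ ∧
      HasFDerivAt (fun ν => DMJ (u ν) ν) (J2 μ) μ := by
    intro μ hμ
    have hwU : u μ ∈ U := hU₀U (huU₀ hμ)
    have hνO : μ ∈ O := hO₀O hμ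
    have hp₀ : ((u μ, μ) : X × M) ∈ U ×ˢ O := ⟨hwU, hνO⟩
    -- the continuous linear equivalence
    set fm : (X × M) →L[ℝ] ((X →L[ℝ] ℝ) × M) :=
      ((DXXJ (u μ) μ).comp (ContinuousLinearMap.fst ℝ X M) +
        (DMDXJ (u μ) μ).comp (ContinuousLinearMap.snd ℝ X M)).prod
        (ContinuousLinearMap.snd ℝ X M) with hfmdef
    set gm : ((X →L[ℝ] ℝ) × M) →L[ℝ] (X × M) :=
      ((Λ μ).comp (ContinuousLinearMap.fst ℝ (X →L[ℝ] ℝ) M -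
        (DMDXJ (u μ) μ).comp (ContinuousLinearMap.snd ℝ (X →L[ℝ] ℝ) M))).prod
        (ContinuousLinearMap.snd ℝ (X →L[ℝ] ℝ) M) with hgmdef
    have hleftinv : Function.LeftInverse gm fm := by
      rintro ⟨x, m⟩
      have h1 : DXXJ (u μ) μ x + DMDXJ (u μ) μ m - DMDXJ (u μ) μ m = DXXJ (u μ) μ x :=
        add_sub_cancel_right _ _
      simp only [hfmdef, hgmdef, ContinuousLinearMap.prod_apply,
        ContinuousLinearMap.coe_comp', Function.comp_apply, ContinuousLinearMap.coe_fst',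
        ContinuousLinearMap.coe_snd', ContinuousLinearMap.add_apply,
        ContinuousLinearMap.coe_sub', Pi.sub_apply]
      rw [h1, hΛleft μ hμ]
    have hrightinv : Function.RightInverse gm fm := by
      rintro ⟨h, m⟩
      simp only [hfmdef, hgmdef, ContinuousLinearMap.prod_apply,
        ContinuousLinearMap.coe_comp', Function.comp_apply, ContinuousLinearMap.coe_fst',
        ContinuousLinearMap.coe_snd', ContinuousLinearMap.add_apply,
        ContinuousLinearMap.coe_sub', Pi.sub_apply]
      rw [hΛright μ hμ, sub_add_cancel]
    set A : (X × M) ≃L[ℝ] ((X →L[ℝ] ℝ) × M) :=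
      ContinuousLinearEquiv.equivOfInverse fm gm hleftinv hrightinv with hAdef
    have hAcoe : (A : (X × M) →L[ℝ] ((X →L[ℝ] ℝ) × M)) = fm := rfl
    have hAsymm : ∀ q, A.symm q = gm q := fun q => rfl
    -- strict differentiability of p ↦ (DXJ p.1 p.2, p.2)
    have hΦev : (fun p : X × M => DXJ p.1 p.2) =ᶠ[𝓝 ((u μ, μ) : X × M)]
        fun p => R₁ (fderiv ℝ JJ p) := by
      filter_upwards [hUO.mem_nhds hp₀] with q hq
      refine ContinuousLinearMap.ext fun x => ?_
      rw [hR₁apply, ← hcompinl q hq]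
      rfl
    have hΦc1 : ContDiffAt ℝ 1 (fun p : X × M => DXJ p.1 p.2) (u μ, μ) :=
      (R₁.contDiff.comp_contDiffAt _ (hfd1 _ hp₀)).congr_of_eventuallyEq hΦev
    have hfc1 : ContDiffAt ℝ 1 (fun p : X × M => (DXJ p.1 p.2, p.2)) (u μ, μ) :=
      hΦc1.prodMk contDiff_snd.contDiffAt
    have hΦd : HasFDerivAt (fun p : X × M => DXJ p.1 p.2)
        ((DXXJ (u μ) μ).comp (ContinuousLinearMap.fst ℝ X M) +
          (DMDXJ (u μ) μ).comp (ContinuousLinearMap.snd ℝ X M)) (u μ, μ) := by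
      have h1 : HasFDerivAt (fun p : X × M => R₁ (fderiv ℝ JJ p))
          (R₁.comp (Bf (u μ, μ))) (u μ, μ) := R₁.hasFDerivAt.comp _ (hBdiff _ hp₀)
      have h2 : R₁.comp (Bf (u μ, μ)) =
          (DXXJ (u μ) μ).comp (ContinuousLinearMap.fst ℝ X M) +
            (DMDXJ (u μ) μ).comp (ContinuousLinearMap.snd ℝ X M) := by
        refine ContinuousLinearMap.ext fun q => ContinuousLinearMap.ext fun x' => ?_
        have hq : (q : X × M) = (q.1, 0) + (0, q.2) := by simp
        have hL : R₁.comp (Bf (u μ, μ)) q x' = Bf (u μ, μ) q (x', 0) := by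
          rw [ContinuousLinearMap.comp_apply, hR₁apply]
        rw [hL, hq, map_add, ContinuousLinearMap.add_apply,
          hB1' (u μ) hwU μ hνO q.1 x', hBr' (u μ) hwU μ hνO q.2 (x', 0)]
        simp
      rw [← h2]
      exact (h1.congr_of_eventuallyEq hΦev).congr_fderiv rfl
    have hfd : HasFDerivAt (fun p : X × M => (DXJ p.1 p.2, p.2)) fm (u μ, μ) := by
      rw [hfmdef]
      exact hΦd.prodMk hasFDerivAt_snd
    have hstrict : HasStrictFDerivAt (fun p : X × M => (DXJ p.1 p.2, p.2))
        (A : (X × M) →L[ℝ] ((X →L[ℝ] ℝ) × M)) (u μ, μ) := by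
      have h1 : HasStrictFDerivAt (fun p : X × M => (DXJ p.1 p.2, p.2))
          (fderiv ℝ (fun p : X × M => (DXJ p.1 p.2, p.2)) (u μ, μ)) (u μ, μ) :=
        hfc1.hasStrictFDerivAt (by norm_num)
      have h2 : fderiv ℝ (fun p : X × M => (DXJ p.1 p.2, p.2)) (u μ, μ) =
          (A : (X × M) →L[ℝ] ((X →L[ℝ] ℝ) × M)) := by
        rw [hAcoe]
        exact h1.hasFDerivAt.unique hfd
      rwa [h2] at h1
    -- the local inverse and differentiability of u
    have hfp₀ : (fun p : X × M => (DXJ p.1 p.2, p.2)) (u μ, μ) = ((0 : X →L[ℝ] ℝ), μ) := by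
      simp [hucrit μ hμ]
    have hψstrict : HasStrictFDerivAt
        (hstrict.localInverse (fun p : X × M => (DXJ p.1 p.2, p.2)) A (u μ, μ))
        (A.symm : ((X →L[ℝ] ℝ) × M) →L[ℝ] (X × M)) ((0 : X →L[ℝ] ℝ), μ) := by
      have h := hstrict.to_localInverse
      have hfp₀' : ((DXJ (u μ, μ).1 (u μ, μ).2, (u μ, μ).2) : (X →L[ℝ] ℝ) × M) =
          ((0 : X →L[ℝ] ℝ), μ) := by simp [hucrit μ hμ]
      rwa [hfp₀'] at h
    have hγtend : ContinuousAt (fun ν => ((u ν, ν) : X × M)) μ :=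
      (hu.continuousAt (hO₀.mem_nhds hμ)).prodMk continuousAt_id
    have hev1 : ∀ᶠ ν in 𝓝 μ,
        hstrict.localInverse (fun p : X × M => (DXJ p.1 p.2, p.2)) A (u μ, μ)
          ((0 : X →L[ℝ] ℝ), ν) = (u ν, ν) := by
      have h2 := hγtend.eventually hstrict.eventually_left_inverse
      filter_upwards [h2, hO₀.mem_nhds hμ] with ν hν₁ hν₂
      have h3 : (fun p : X × M => (DXJ p.1 p.2, p.2)) (u ν, ν) = ((0 : X →L[ℝ] ℝ), ν) := by
        simp [hucrit ν hν₂]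
      rw [← h3]
      exact hν₁
    have heq : u =ᶠ[𝓝 μ] fun ν =>
        (hstrict.localInverse (fun p : X × M => (DXJ p.1 p.2, p.2)) A (u μ, μ)
          ((0 : X →L[ℝ] ℝ), ν)).1 := by
      filter_upwards [hev1] with ν h
      rw [h]
    set u' : M →L[ℝ] X := (ContinuousLinearMap.fst ℝ X M).comp
      ((A.symm : ((X →L[ℝ] ℝ) × M) →L[ℝ] (X × M)).comp
        ((0 : M →L[ℝ] (X →L[ℝ] ℝ)).prod (ContinuousLinearMap.id ℝ M))) with hu'def
    have hmkd : HasFDerivAt (fun ν : M => (((0 : X →L[ℝ] ℝ), ν) : (X →L[ℝ] ℝ) × M))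
        ((0 : M →L[ℝ] (X →L[ℝ] ℝ)).prod (ContinuousLinearMap.id ℝ M)) μ :=
      (hasFDerivAt_const _ _).prodMk (hasFDerivAt_id μ)
    have hu'd : HasFDerivAt u u' μ := by
      refine HasFDerivAt.congr_of_eventuallyEq ?_ heq
      exact hasFDerivAt_fst.comp μ ((hψstrict.hasFDerivAt).comp μ hmkd)
    have hu'apply : ∀ m : M, u' m = -(Λ μ (DMDXJ (u μ) μ m)) := by
      intro m
      have h1 : u' m = (A.symm (((0 : X →L[ℝ] ℝ), m) : (X →L[ℝ] ℝ) × M)).1 := rfl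
      rw [h1, hAsymm]
      simp only [hgmdef, ContinuousLinearMap.prod_apply, ContinuousLinearMap.coe_comp',
        Function.comp_apply, ContinuousLinearMap.coe_fst', ContinuousLinearMap.coe_snd',
        ContinuousLinearMap.coe_sub', Pi.sub_apply]
      rw [zero_sub, map_neg]
    -- derivative of the curve
    have hγ'd : HasFDerivAt (fun ν => ((u ν, ν) : X × M))
        (u'.prod (ContinuousLinearMap.id ℝ M)) μ := hu'd.prodMk (hasFDerivAt_id μ)
    -- first derivative of the minimum value
    have h1st : HasFDerivAt (fun ν => J (u ν) ν) (DMJ (u μ) μ) μ := by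
      have hc := HasFDerivAt.comp (f := fun ν : M => ((u ν, ν) : X × M)) μ (hJJdiff (u μ, μ) hp₀) hγ'd
      have he : (fderiv ℝ JJ (u μ, μ)).comp (u'.prod (ContinuousLinearMap.id ℝ M)) =
          DMJ (u μ) μ := by
        refine ContinuousLinearMap.ext fun m => ?_
        have h4 := happly (u μ, μ) hp₀ (u' m) m
        rw [ContinuousLinearMap.comp_apply, ContinuousLinearMap.prod_apply]
        simp only [ContinuousLinearMap.coe_id', id_eq]
        rw [h4, hucrit μ hμ]
        simp
      rw [← he]
      exact hc
    -- second derivative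
    have hDMJev : (fun ν => DMJ (u ν) ν) =ᶠ[𝓝 μ]
        fun ν => R₂ (fderiv ℝ JJ (u ν, ν)) := by
      filter_upwards [hO₀.mem_nhds hμ] with ν hν
      refine ContinuousLinearMap.ext fun m => ?_
      rw [hR₂apply, ← hcompinr (u ν, ν) (hγmem ν hν)]
      rfl
    have hchain := R₂.hasFDerivAt.comp μ (HasFDerivAt.comp (f := fun ν : M => ((u ν, ν) : X × M)) μ (hBdiff (u μ, μ) hp₀) hγ'd)
    have hGder : HasFDerivAt (fun ν => DMJ (u ν) ν)
        (R₂.comp ((Bf (u μ, μ)).comp (u'.prod (ContinuousLinearMap.id ℝ M)))) μ :=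
      hchain.congr_of_eventuallyEq hDMJev
    have hfinal : R₂.comp ((Bf (u μ, μ)).comp (u'.prod (ContinuousLinearMap.id ℝ M))) =
        J2 μ := by
      refine ContinuousLinearMap.ext fun m => ContinuousLinearMap.ext fun m' => ?_
      have hL : (R₂.comp ((Bf (u μ, μ)).comp (u'.prod (ContinuousLinearMap.id ℝ M)))) m m' =
          Bf (u μ, μ) (u' m, m) (0, m') := by
        rw [ContinuousLinearMap.comp_apply, ContinuousLinearMap.comp_apply, hR₂apply]
        rfl
      have hsplit : ((u' m, m) : X × M) = (u' m, 0) + (0, m) := by simp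
      rw [hL, hsplit, map_add, ContinuousLinearMap.add_apply]
      rw [hBsymm (u μ, μ) hp₀ (u' m, 0) (0, m'),
        hBr' (u μ) hwU μ hνO m' ((u' m, 0) : X × M),
        hBr' (u μ) hwU μ hνO m ((0, m') : X × M)]
      simp only [map_zero]
      rw [hu'apply m, hJ2apply μ m m', map_neg]
      simp
      ring
    rw [← hfinal]
    exact ⟨h1st, hGder⟩
  -- continuity of J2
  have hJJ2 : ContDiffOn ℝ (1 + 1) JJ (U ×ˢ O) := hJC2.of_le (by norm_num)
  have hfd1on : ContDiffOn ℝ 1 (fderiv ℝ JJ) (U ×ˢ O) :=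
    ((contDiffOn_succ_iff_fderiv_of_isOpen hUO).1 hJJ2).2.2
  have hfd0on : ContDiffOn ℝ (0 + 1) (fderiv ℝ JJ) (U ×ˢ O) := hfd1on.of_le (by norm_num)
  have hBfcont : ContinuousOn Bf (U ×ˢ O) :=
    (((contDiffOn_succ_iff_fderiv_of_isOpen hUO).1 hfd0on).2.2).continuousOn
  have hγconton : ContinuousOn (fun ν => ((u ν, ν) : X × M)) O₀ :=
    hu.prodMk continuousOn_id
  have hBγ : ContinuousOn (fun μ => Bf (u μ, μ)) O₀ :=
    hBfcont.comp hγconton (fun μ hμ => hγmem μ hμ)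
  have hDMMc : ContinuousOn (fun μ => DMMJ (u μ) μ) O₀ := by
    have hc : ContinuousOn
        (fun μ => (R₂.comp (Bf (u μ, μ))).comp (ContinuousLinearMap.inr ℝ X M)) O₀ :=
      (continuousOn_const.clm_comp hBγ).clm_comp continuousOn_const
    refine ContinuousOn.congr hc fun μ hμ => ?_
    refine ContinuousLinearMap.ext fun m => ContinuousLinearMap.ext fun m' => ?_
    rw [ContinuousLinearMap.comp_apply, ContinuousLinearMap.comp_apply,
      ContinuousLinearMap.inr_apply, hR₂apply,
      hBr' (u μ) (hγmem μ hμ).1 μ (hγmem μ hμ).2 m ((0, m') : X × M)]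
    simp
  have hDMDXc : ContinuousOn (fun μ => DMDXJ (u μ) μ) O₀ := by
    have hc : ContinuousOn
        (fun μ => (R₁.comp (Bf (u μ, μ))).comp (ContinuousLinearMap.inr ℝ X M)) O₀ :=
      (continuousOn_const.clm_comp hBγ).clm_comp continuousOn_const
    refine ContinuousOn.congr hc fun μ hμ => ?_
    refine ContinuousLinearMap.ext fun m => ContinuousLinearMap.ext fun x => ?_
    rw [ContinuousLinearMap.comp_apply, ContinuousLinearMap.comp_apply,
      ContinuousLinearMap.inr_apply, hR₁apply,
      hBr' (u μ) (hγmem μ hμ).1 μ (hγmem μ hμ).2 m ((x, 0) : X × M)]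
    simp
  have hflipc : ContinuousOn (fun μ => (DMDXJ (u μ) μ).flip) O₀ := by
    have hc : ContinuousOn
        (fun μ => (R₂.comp (Bf (u μ, μ))).comp (ContinuousLinearMap.inl ℝ X M)) O₀ :=
      (continuousOn_const.clm_comp hBγ).clm_comp continuousOn_const
    refine ContinuousOn.congr hc fun μ hμ => ?_
    refine ContinuousLinearMap.ext fun x => ContinuousLinearMap.ext fun m => ?_
    rw [ContinuousLinearMap.comp_apply, ContinuousLinearMap.comp_apply,
      ContinuousLinearMap.inl_apply, hR₂apply,
      hBsymm (u μ, μ) (hγmem μ hμ) ((x, 0) : X × M) ((0, m) : X × M),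
      hBr' (u μ) (hγmem μ hμ).1 μ (hγmem μ hμ).2 m ((x, 0) : X × M)]
    simp
  have hFc : ContinuousOn (fun μ => DXXJ (u μ) μ) O₀ := by
    have hc : ContinuousOn
        (fun μ => (R₁.comp (Bf (u μ, μ))).comp (ContinuousLinearMap.inl ℝ X M)) O₀ :=
      (continuousOn_const.clm_comp hBγ).clm_comp continuousOn_const
    refine ContinuousOn.congr hc fun μ hμ => ?_
    refine ContinuousLinearMap.ext fun x => ContinuousLinearMap.ext fun x' => ?_
    rw [ContinuousLinearMap.comp_apply, ContinuousLinearMap.comp_apply,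
      ContinuousLinearMap.inl_apply, hR₁apply,
      hB1' (u μ) (hγmem μ hμ).1 μ (hγmem μ hμ).2 x x']
  have hΛc : ContinuousOn (fun μ => Λ μ) O₀ := by
    intro μb hμb
    have hRc : ContinuousOn (fun μ => (Λ μb).comp (DXXJ (u μ) μ)) O₀ :=
      continuousOn_const.clm_comp hFc
    have hTΛT : ∀ h : X →L[ℝ] ℝ, DXXJ (u μb) μb (Λ μb h) = h := hΛright μb hμb
    have hunit : ∀ μ ∈ O₀, ∃ v : (X →L[ℝ] X)ˣ,
        (v : X →L[ℝ] X) = (Λ μb).comp (DXXJ (u μ) μ) ∧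
        ((v⁻¹ : (X →L[ℝ] X)ˣ) : X →L[ℝ] X) = (Λ μ).comp (DXXJ (u μb) μb) := by
      intro μ hμ
      refine ⟨⟨(Λ μb).comp (DXXJ (u μ) μ), (Λ μ).comp (DXXJ (u μb) μb), ?_, ?_⟩, rfl, rfl⟩
      · refine ContinuousLinearMap.ext fun x => ?_
        rw [ContinuousLinearMap.mul_apply]
        simp only [ContinuousLinearMap.coe_comp', Function.comp_apply]
        rw [hΛright μ hμ, hΛleft μb hμb]
        rfl
      · refine ContinuousLinearMap.ext fun x => ?_
        rw [ContinuousLinearMap.mul_apply]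
        simp only [ContinuousLinearMap.coe_comp', Function.comp_apply]
        rw [hTΛT, hΛleft μ hμ]
        rfl
    have hinv : ∀ μ ∈ O₀,
        Λ μ = (Ring.inverse ((Λ μb).comp (DXXJ (u μ) μ))).comp (Λ μb) := by
      intro μ hμ
      obtain ⟨v, hv1, hv2⟩ := hunit μ hμ
      rw [← hv1, Ring.inverse_unit, hv2]
      refine ContinuousLinearMap.ext fun h => ?_
      simp only [ContinuousLinearMap.coe_comp', Function.comp_apply]
      rw [hTΛT]
    have h1 : ContinuousWithinAt (fun μ => Ring.inverse ((Λ μb).comp (DXXJ (u μ) μ))) O₀ μb := by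
      obtain ⟨v, hv1, _⟩ := hunit μb hμb
      have h2 := NormedRing.inverse_continuousAt v
      rw [hv1] at h2
      exact ContinuousAt.comp_continuousWithinAt (f := fun μ => (Λ μb).comp (DXXJ (u μ) μ)) h2 (hRc μb hμb)
    have hpost : Continuous fun b : X →L[ℝ] X => b.comp (Λ μb) :=
      (((ContinuousLinearMap.compL ℝ (X →L[ℝ] ℝ) X X).flip (Λ μb)).continuous).congr
        (fun b => by simp)
    have hcw : ContinuousWithinAt
        (fun μ => (Ring.inverse ((Λ μb).comp (DXXJ (u μ) μ))).comp (Λ μb)) O₀ μb :=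
      ContinuousAt.comp_continuousWithinAt hpost.continuousAt h1
    exact hcw.congr (fun μ hμ => hinv μ hμ) (hinv μb hμb)
  have hJ2c : ContinuousOn J2 O₀ := by
    rw [hJ2def]
    haveI : ContinuousSub (M →L[ℝ] M →L[ℝ] ℝ) :=
      @IsTopologicalAddGroup.to_continuousSub (M →L[ℝ] M →L[ℝ] ℝ) _ _ inferInstance
    exact hDMMc.sub (hflipc.clm_comp (hΛc.clm_comp hDMDXc))
  exact ⟨J2, hJ2c, fun μ hμ => ⟨(main μ hμ).1, (main μ hμ).2, hJ2apply μ⟩⟩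
end

section
/- Let Ω₀ ⊂ ℝⁿ be a bounded convex domain and φ ∈ W^{1,∞}(Ω₀, ℝⁿ) with θ := |φ − id|_{Lip,Ω₀} < 1. Then the Jacobian determinant satisfies ess-inf over Ω₀ of det(∇φᵀ) ≥ (1 − θ)ⁿ > 0. -/
open Set Filter Topology MeasureTheory


-- auxiliary lemmas
section JacobianAux
open Metric

lemma clm_det_ne_zero {n : ℕ} (B : EuclideanSpace ℝ (Fin n) →L[ℝ] EuclideanSpace ℝ (Fin n))
    (hu : IsUnit B) :
    LinearMap.det (B : EuclideanSpace ℝ (Fin n) →ₗ[ℝ] EuclideanSpace ℝ (Fin n)) ≠ 0 := by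
  rcases hu with ⟨u, rfl⟩
  have h1 : LinearMap.det (((u : _) * (↑u⁻¹ : _) :
      EuclideanSpace ℝ (Fin n) →L[ℝ] EuclideanSpace ℝ (Fin n)) :
      EuclideanSpace ℝ (Fin n) →ₗ[ℝ] EuclideanSpace ℝ (Fin n)) = 1 := by
    rw [u.mul_inv]
    simp [ContinuousLinearMap.one_def]
  rw [ContinuousLinearMap.mul_def, ContinuousLinearMap.toLinearMap_comp, LinearMap.det_comp] at h1
  exact left_ne_zero_of_mul_eq_one h1

lemma det_one_add_ge {n : ℕ} {θ : ℝ} (hθ0 : 0 ≤ θ) (hθ : θ < 1)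
    (A : EuclideanSpace ℝ (Fin n) →L[ℝ] EuclideanSpace ℝ (Fin n)) (hA : ‖A‖ ≤ θ) :
    (1 - θ) ^ n ≤
      LinearMap.det ((1 + A : EuclideanSpace ℝ (Fin n) →L[ℝ] EuclideanSpace ℝ (Fin n)) :
        EuclideanSpace ℝ (Fin n) →ₗ[ℝ] EuclideanSpace ℝ (Fin n)) := by
  set B : EuclideanSpace ℝ (Fin n) →L[ℝ] EuclideanSpace ℝ (Fin n) := 1 + A with hB
  have hunit : ∀ t : ℝ, t ∈ Icc (0:ℝ) 1 →
      IsUnit (1 + t • A : EuclideanSpace ℝ (Fin n) →L[ℝ] EuclideanSpace ℝ (Fin n)) := by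
    intro t ht
    have h1 : ‖-(t • A)‖ < 1 := by
      rw [norm_neg]
      have h2 := norm_smul_le t A
      rw [Real.norm_eq_abs, abs_of_nonneg ht.1] at h2
      have : t * ‖A‖ ≤ 1 * θ := mul_le_mul ht.2 hA (norm_nonneg _) zero_le_one
      linarith
    have hu := (Units.oneSub _ h1).isUnit
    simpa [sub_neg_eq_add] using hu
  set f : ℝ → ℝ := fun t =>
    ((1 + t • A : EuclideanSpace ℝ (Fin n) →L[ℝ] EuclideanSpace ℝ (Fin n))).det with hf
  have hfc : Continuous f :=
    ContinuousLinearMap.continuous_det.comp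
      (continuous_const.add (continuous_id.smul continuous_const))
  have hf0 : f 0 = 1 := by simp [hf, ContinuousLinearMap.det, ContinuousLinearMap.one_def]
  have hfne : ∀ t ∈ Icc (0:ℝ) 1, f t ≠ 0 := fun t ht => clm_det_ne_zero _ (hunit t ht)
  -- positivity of det B = f 1
  have hBdet_pos : 0 < ContinuousLinearMap.det B := by
    have hf1 : f 1 = B.det := by simp [hf, hB]
    by_contra h
    push_neg at h
    have hlt : f 1 < 0 := by
      rw [hf1]
      rcases lt_or_eq_of_le h with h' | h'
      · exact h'
      · exact absurd (by rw [hf1]; exact h') (hfne 1 ⟨zero_le_one, le_refl 1⟩)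
    have : (0:ℝ) ∈ f '' Icc 0 1 := by
      apply intermediate_value_Icc' zero_le_one hfc.continuousOn
      exact ⟨hlt.le, by rw [hf0]; exact zero_le_one⟩
    rcases this with ⟨t, ht, hft⟩
    exact hfne t ht hft
  -- lower bound on |det B| via measure theory
  have habs : (1 - θ) ^ n ≤ |ContinuousLinearMap.det B| := by
    rcases Nat.eq_zero_or_pos n with rfl | hn
    · haveI : Subsingleton (EuclideanSpace ℝ (Fin 0)) :=
        inferInstanceAs (Subsingleton (PiLp 2 fun _ : Fin 0 => ℝ))
      rw [ContinuousLinearMap.det, LinearMap.det_eq_one_of_subsingleton]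
      norm_num
    · haveI : Nonempty (Fin n) := Fin.pos_iff_nonempty.mp hn
      have hsub : ball (0 : EuclideanSpace ℝ (Fin n)) (1 - θ) ⊆ B '' ball 0 1 := by
        intro y hy
        have hBsurj : Function.Surjective B := by
          rcases hunit 1 ⟨zero_le_one, le_refl 1⟩ with ⟨u, hu⟩
          have hu' : (u : _) = B := by rw [hu, hB]; simp
          intro z
          exact ⟨(↑u⁻¹ : EuclideanSpace ℝ (Fin n) →L[ℝ] EuclideanSpace ℝ (Fin n)) z, by
            have := congrArg (fun L : EuclideanSpace ℝ (Fin n) →L[ℝ] EuclideanSpace ℝ (Fin n) => L z) (hu' ▸ u.mul_inv)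
            simpa using this⟩
        rcases hBsurj y with ⟨v, rfl⟩
        have hlow : (1 - θ) * ‖v‖ ≤ ‖B v‖ := by
          have : ‖B v‖ = ‖v + A v‖ := by simp [hB]
          rw [this]
          have h1 : ‖v‖ ≤ ‖v + A v‖ + ‖A v‖ := by
            simpa using norm_sub_le (v + A v) (A v)
          have h2 : ‖A v‖ ≤ θ * ‖v‖ :=
            (A.le_opNorm v).trans (mul_le_mul_of_nonneg_right hA (norm_nonneg v))
          nlinarith [norm_nonneg v]
        refine ⟨v, ?_, rfl⟩
        rw [mem_ball_zero_iff] at hy ⊢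
        nlinarith [norm_nonneg (B v), norm_nonneg v]
      have hmeas := measure_mono (μ := volume) hsub
      have himg : volume (B '' ball (0 : EuclideanSpace ℝ (Fin n)) 1) =
          ENNReal.ofReal |B.det| * volume (ball (0 : EuclideanSpace ℝ (Fin n)) 1) := by
        have := MeasureTheory.Measure.addHaar_image_linearMap (μ := volume)
          (B : EuclideanSpace ℝ (Fin n) →ₗ[ℝ] EuclideanSpace ℝ (Fin n))
          (ball (0 : EuclideanSpace ℝ (Fin n)) 1)
        exact this
      have hball : volume (ball (0 : EuclideanSpace ℝ (Fin n)) (1 - θ)) =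
          ENNReal.ofReal ((1 - θ) ^ n) * volume (ball (0 : EuclideanSpace ℝ (Fin n)) 1) := by
        rw [MeasureTheory.Measure.addHaar_ball volume _ (by linarith : (0:ℝ) ≤ 1 - θ)]
        congr 2
        simp [finrank_euclideanSpace_fin]
      rw [hball, himg] at hmeas
      have h0 : volume (ball (0 : EuclideanSpace ℝ (Fin n)) 1) ≠ 0 :=
        (measure_ball_pos volume _ one_pos).ne'
      have htop : volume (ball (0 : EuclideanSpace ℝ (Fin n)) 1) ≠ ⊤ :=
        (measure_ball_lt_top).ne
      have := (ENNReal.mul_le_mul_iff_left h0 htop).mp hmeas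
      rw [ENNReal.ofReal_le_ofReal_iff (abs_nonneg _)] at this
      exact this
  have : (1 - θ) ^ n ≤ ContinuousLinearMap.det B := habs.trans_eq (abs_of_pos hBdet_pos)
  exact this

end JacobianAux

/-- **Jacobian bound for Lipschitz deformations** (inequality (3.1) of
Kimura–Wakano).  Let `Ω₀ ⊆ ℝⁿ` be a bounded convex domain and
`φ ∈ W^{1,∞}(Ω₀,ℝⁿ)` with `θ := |φ − id|_{Lip,Ω₀} < 1`.  Then the Jacobian
determinant `det ∇φᵀ` (which by Rademacher's theorem is defined a.e. via the
Fréchet derivative of `φ`) satisfies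
`ess-inf_{Ω₀} det ∇φᵀ ≥ (1 − θ)ⁿ > 0`, i.e. `det (fderiv ℝ φ x) ≥ (1 − θ)ⁿ`
for a.e. `x ∈ Ω₀`, and `(1 − θ)ⁿ > 0`. -/
theorem jacobian_essinf_bound (n : ℕ)
    (Ω₀ : Set (EuclideanSpace ℝ (Fin n)))
    (hΩ₀open : IsOpen Ω₀) (hΩ₀bdd : Bornology.IsBounded Ω₀)
    (hΩ₀conv : Convex ℝ Ω₀) (hΩ₀ne : Ω₀.Nonempty)
    (φ : EuclideanSpace ℝ (Fin n) → EuclideanSpace ℝ (Fin n))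
    (θ : NNReal) (hθ : θ < 1)
    (hlip : LipschitzOnWith θ (fun x => φ x - x) Ω₀) :
    (∀ᵐ x ∂(volume.restrict Ω₀),
      (1 - (θ : ℝ)) ^ n ≤
        LinearMap.det
          (fderiv ℝ φ x :
            EuclideanSpace ℝ (Fin n) →ₗ[ℝ] EuclideanSpace ℝ (Fin n))) ∧
    0 < (1 - (θ : ℝ)) ^ n := by
  have hθR : (θ : ℝ) < 1 := by exact_mod_cast hθ
  have hθ0 : (0:ℝ) ≤ θ := θ.coe_nonneg
  refine ⟨?_, pow_pos (by linarith) n⟩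
  have key := hlip.ae_differentiableWithinAt_of_mem (μ := volume)
  rw [ae_restrict_iff' hΩ₀open.measurableSet]
  filter_upwards [key] with x hx hxΩ
  have hdiff : DifferentiableAt ℝ (fun y => φ y - y) x :=
    (hx hxΩ).differentiableAt (hΩ₀open.mem_nhds hxΩ)
  set A := fderiv ℝ (fun y => φ y - y) x with hA
  have hAle : ‖A‖ ≤ (θ : ℝ) :=
    norm_fderiv_le_of_lipschitzOn ℝ (hΩ₀open.mem_nhds hxΩ) hlip
  have hφd : HasFDerivAt φ (A + ContinuousLinearMap.id ℝ (EuclideanSpace ℝ (Fin n))) x := by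
    have h := hdiff.hasFDerivAt.add (hasFDerivAt_id x)
    have hfun : (fun y => (φ y - y) + id y) = φ := by
      funext y; simp
    rw [← hfun]
    exact h
  rw [hφd.fderiv, show A + ContinuousLinearMap.id ℝ (EuclideanSpace ℝ (Fin n)) = 1 + A by
    rw [ContinuousLinearMap.one_def]; exact add_comm _ _]
  exact det_one_add_ge hθ0 hθR A hAle
end
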